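/- arXiv:1311.1558 — 3 statements merged into one kernel-verified Lean document; each statement's English description precedes it below -/
import Mathlib

section
/- The group G = {A ∈ O(4,ℝ) : A maps the set {-1,1}^4 onto itself} has order 384; the natural action of the quotient G/{±I} on the vertices of H gives an injective group homomorphism from G/{±I} into the automorphism group of H, whose image is exactly the set of automorphisms of H that induce a permutation of the direction classes {D_1, D_2, D_3, D_4}. -/
open scoped Classical

noncomputable section

abbrev V4 := Fin 4 → ℝ

def cubeSet : Set V4 := {v | ∀ i, v i = 1 ∨ v i = -1}

abbrev CubeV := {v : V4 // v ∈ cubeSet}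

/-- `v` and `w` differ in exactly the coordinate `i`. -/
def diffExactly {n : ℕ} (v w : Fin n → ℝ) (i : Fin n) : Prop := ∀ j, v j ≠ w j ↔ j = i

/-- `v` and `w` differ in exactly one coordinate. -/
def diffOne {n : ℕ} (v w : Fin n → ℝ) : Prop := ∃ i, diffExactly v w i

instance antipodalSetoid : Setoid CubeV where
  r v w := (v : V4) = (w : V4) ∨ (v : V4) = -(w : V4)
  iseqv := by
    constructor
    · exact fun v => Or.inl rfl
    · rintro v w (h | h)
      · exact Or.inl h.symm
      · right; rw [h, neg_neg]
    · rintro u v w (h1 | h1) (h2 | h2)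
      · exact Or.inl (h1.trans h2)
      · exact Or.inr (h1.trans h2)
      · right; rw [h1, h2]
      · left; rw [h1, h2, neg_neg]

/-- vertices of the hemi-hypercube: antipodal pairs of vertices of the hypercube -/
def HVert := Quotient antipodalSetoid

/-- the hemi-hypercube graph -/
def H : SimpleGraph HVert where
  Adj x y := x ≠ y ∧ ∃ v w : CubeV, (⟦v⟧ : HVert) = x ∧ (⟦w⟧ : HVert) = y ∧
    diffOne (v : V4) (w : V4)
  symm := by
    constructor
    rintro x y ⟨hxy, v, w, hv, hw, i, hi⟩
    exact ⟨hxy.symm, w, v, hw, hv, i, fun j => by rw [← hi j]; exact ne_comm⟩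
  loopless := by constructor; rintro x ⟨h, -⟩; exact h rfl

/-- the direction class `D i` -/
def D (i : Fin 4) : Set (Sym2 HVert) :=
  {e | e ∈ H.edgeSet ∧ ∃ v w : CubeV,
    e = s((⟦v⟧ : HVert), (⟦w⟧ : HVert)) ∧ diffExactly (v : V4) (w : V4) i}

/-- a set of edges of `G` is a perfect matching -/
def IsPM {V : Type*} (G : SimpleGraph V) (M : Set (Sym2 V)) : Prop :=
  M ⊆ G.edgeSet ∧ ∀ v : V, ∃! e : Sym2 V, e ∈ M ∧ v ∈ e

/-- a chiral partition of `H`: a partition of the edge set of `H` into four perfect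
matchings, each containing exactly one edge from each direction class. -/
def IsChiralPartition (M : Fin 4 → Set (Sym2 HVert)) : Prop :=
  (∀ k, IsPM H (M k)) ∧
  (∀ e ∈ H.edgeSet, ∃! k, e ∈ M k) ∧
  (∀ k i, ∃! e, e ∈ M k ∧ e ∈ D i)

/-- the subgroup of `O(4,ℝ)` of matrices mapping the hypercube vertex set `{-1,1}^4`
onto itself -/
def bigG : Subgroup (Matrix.orthogonalGroup (Fin 4) ℝ) where
  carrier := {A | Matrix.mulVec ((A : Matrix.orthogonalGroup (Fin 4) ℝ) :
    Matrix (Fin 4) (Fin 4) ℝ) '' cubeSet = cubeSet}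
  one_mem' := by
    show Matrix.mulVec ((1 : Matrix.orthogonalGroup (Fin 4) ℝ) : Matrix (Fin 4) (Fin 4) ℝ)
        '' cubeSet = cubeSet
    rw [Matrix.UnitaryGroup.one_val]
    ext v
    constructor
    · rintro ⟨w, hw, rfl⟩; rwa [Matrix.one_mulVec]
    · intro hv; exact ⟨v, hv, Matrix.one_mulVec v⟩
  mul_mem' := by
    intro A B hA hB
    show Matrix.mulVec ((A * B : Matrix.orthogonalGroup (Fin 4) ℝ) : Matrix (Fin 4) (Fin 4) ℝ)
        '' cubeSet = cubeSet
    rw [Matrix.UnitaryGroup.mul_val]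
    have hfun : (fun v : V4 => Matrix.mulVec (A : Matrix (Fin 4) (Fin 4) ℝ)
        (Matrix.mulVec (B : Matrix (Fin 4) (Fin 4) ℝ) v))
        = Matrix.mulVec ((A : Matrix (Fin 4) (Fin 4) ℝ) * (B : Matrix (Fin 4) (Fin 4) ℝ)) :=
      funext fun v => Matrix.mulVec_mulVec v _ _
    calc Matrix.mulVec ((A : Matrix (Fin 4) (Fin 4) ℝ) * (B : Matrix (Fin 4) (Fin 4) ℝ)) '' cubeSet
        = (fun v : V4 => Matrix.mulVec (A : Matrix (Fin 4) (Fin 4) ℝ)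
            (Matrix.mulVec (B : Matrix (Fin 4) (Fin 4) ℝ) v)) '' cubeSet := by rw [hfun]
      _ = Matrix.mulVec (A : Matrix (Fin 4) (Fin 4) ℝ)
            '' (Matrix.mulVec (B : Matrix (Fin 4) (Fin 4) ℝ) '' cubeSet) :=
          (Set.image_image _ _ _).symm
      _ = Matrix.mulVec (A : Matrix (Fin 4) (Fin 4) ℝ) '' cubeSet := by rw [hB]
      _ = cubeSet := hA
  inv_mem' := by
    intro A hA
    show Matrix.mulVec ((A⁻¹ : Matrix.orthogonalGroup (Fin 4) ℝ) : Matrix (Fin 4) (Fin 4) ℝ)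
        '' cubeSet = cubeSet
    conv_lhs => rw [← hA]
    rw [Set.image_image]
    have hfun : (fun v : V4 => Matrix.mulVec ((A⁻¹ : Matrix.orthogonalGroup (Fin 4) ℝ) :
        Matrix (Fin 4) (Fin 4) ℝ) (Matrix.mulVec (A : Matrix (Fin 4) (Fin 4) ℝ) v)) = id := by
      funext v
      show Matrix.mulVec _ (Matrix.mulVec _ v) = v
      rw [Matrix.mulVec_mulVec]
      have h1 : ((A⁻¹ : Matrix.orthogonalGroup (Fin 4) ℝ) : Matrix (Fin 4) (Fin 4) ℝ)
          * (A : Matrix (Fin 4) (Fin 4) ℝ) = 1 := by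
        rw [Matrix.UnitaryGroup.inv_val]
        exact A.2.1
      rw [h1, Matrix.one_mulVec]
    rw [hfun, Set.image_id]

lemma negOne_mem_orth : (-1 : Matrix (Fin 4) (Fin 4) ℝ) ∈ Matrix.orthogonalGroup (Fin 4) ℝ := by
  rw [Matrix.mem_orthogonalGroup_iff]
  simp

lemma negG_mem : (⟨-1, negOne_mem_orth⟩ : Matrix.orthogonalGroup (Fin 4) ℝ) ∈ bigG := by
  show Matrix.mulVec (-1 : Matrix (Fin 4) (Fin 4) ℝ) '' cubeSet = cubeSet
  have h : Matrix.mulVec (-1 : Matrix (Fin 4) (Fin 4) ℝ) = fun v : V4 => -v := by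
    funext v
    rw [Matrix.neg_mulVec, Matrix.one_mulVec]
  rw [h]
  ext v
  constructor
  · rintro ⟨w, hw, rfl⟩ i
    rcases hw i with h' | h' <;> simp [h']
  · intro hv
    exact ⟨-v, fun i => by rcases hv i with h' | h' <;> simp [h'], by simp⟩

/-- the element `-I` of `G` -/
def negG : bigG := ⟨⟨-1, negOne_mem_orth⟩, negG_mem⟩

instance zpowersNegGNormal : (Subgroup.zpowers negG).Normal := by
  have hc : ∀ g : bigG, Commute negG g := by
    intro g
    have h1 : (negG : Matrix.orthogonalGroup (Fin 4) ℝ) * (g : Matrix.orthogonalGroup (Fin 4) ℝ)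
        = (g : Matrix.orthogonalGroup (Fin 4) ℝ) * (negG : Matrix.orthogonalGroup (Fin 4) ℝ) := by
      apply Subtype.ext
      show (-1 : Matrix (Fin 4) (Fin 4) ℝ) * _ = _ * (-1 : Matrix (Fin 4) (Fin 4) ℝ)
      rw [neg_one_mul, mul_neg_one]
    exact Subtype.ext h1
  constructor
  intro x hx g
  rcases Subgroup.mem_zpowers_iff.mp hx with ⟨k, rfl⟩
  have h2 : Commute (negG ^ k) g := (hc g).zpow_left k
  have h3 : g * negG ^ k * g⁻¹ = negG ^ k := by
    calc g * negG ^ k * g⁻¹ = negG ^ k * g * g⁻¹ := by rw [← h2.eq]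
      _ = negG ^ k := mul_inv_cancel_right _ _
  rw [h3]
  exact hx

/-- the quotient group `G/{±I}` -/
abbrev QG := bigG ⧸ Subgroup.zpowers negG

/-- the matrix underlying an element of `G` -/
def matOf (A : bigG) : Matrix (Fin 4) (Fin 4) ℝ :=
  ((A : Matrix.orthogonalGroup (Fin 4) ℝ) : Matrix (Fin 4) (Fin 4) ℝ)

/-- `f : G/{±I} → Aut H` is the natural action of `G/{±I}` on the vertices of `H`,
i.e. the class of `A` sends the antipodal pair of `v` to the antipodal pair of `A·v`. -/
def IsNaturalAction (f : QG →* (H ≃g H)) : Prop :=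
  ∀ (A : bigG) (v : CubeV), ∃ w : CubeV,
    (w : V4) = Matrix.mulVec (matOf A) (v : V4) ∧
    (f (QuotientGroup.mk A)) (⟦v⟧ : HVert) = (⟦w⟧ : HVert)

/-! ### Signed permutation matrices -/

def sgn (b : Bool) : ℝ := if b then 1 else -1

lemma sgn_mul_self (b : Bool) : sgn b * sgn b = 1 := by cases b <;> simp [sgn]

lemma sgn_ne_zero (b : Bool) : sgn b ≠ 0 := by cases b <;> norm_num [sgn]

def spMat (s : Fin 4 → Bool) (τ : Equiv.Perm (Fin 4)) : Matrix (Fin 4) (Fin 4) ℝ :=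
  Matrix.of fun k i => if k = τ i then sgn (s i) else 0

lemma spMat_mulVec (s : Fin 4 → Bool) (τ : Equiv.Perm (Fin 4)) (v : V4) (k : Fin 4) :
    (spMat s τ).mulVec v k = sgn (s (τ.symm k)) * v (τ.symm k) := by
  unfold Matrix.mulVec dotProduct spMat
  rw [Finset.sum_eq_single (τ.symm k)]
  · simp
  · intro b _ hb
    have : k ≠ τ b := fun h => hb (by simp [h])
    simp [this]
  · simp

lemma spMat_star (s : Fin 4 → Bool) (τ : Equiv.Perm (Fin 4)) :
    star (spMat s τ) = spMat (fun j => s (τ.symm j)) τ⁻¹ := by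
  ext k i
  show (spMat s τ) i k = _
  unfold spMat
  simp only [Matrix.of_apply]
  by_cases h : i = τ k
  · have h2 : k = τ⁻¹ i := by simp [h]
    simp [h, ← h2]
  · have h2 : k ≠ τ⁻¹ i := fun hc => h (by simp [hc])
    simp [h]
    exact fun hc => absurd hc h2

lemma spMat_inv_mul (s : Fin 4 → Bool) (τ : Equiv.Perm (Fin 4)) :
    spMat (fun j => s (τ.symm j)) τ⁻¹ * spMat s τ = 1 := by
  ext k l
  rw [Matrix.mul_apply]
  unfold spMat
  simp only [Matrix.of_apply]
  rw [Finset.sum_eq_single (τ l)]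
  · have h1 : (τ⁻¹ : Equiv.Perm (Fin 4)) (τ l) = l := by simp
    by_cases hkl : k = l
    · subst hkl
      simp [h1, sgn_mul_self, Matrix.one_apply]
    · have : k ≠ (τ⁻¹ : Equiv.Perm (Fin 4)) (τ l) := by rw [h1]; exact hkl
      simp [this, Matrix.one_apply, hkl]
  · intro b _ hb
    have : b ≠ τ l := hb
    simp [this]
  · simp

lemma spMat_mem_orth (s : Fin 4 → Bool) (τ : Equiv.Perm (Fin 4)) :
    spMat s τ ∈ Matrix.orthogonalGroup (Fin 4) ℝ := by
  rw [Matrix.mem_orthogonalGroup_iff']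
  rw [← Matrix.conjTranspose_eq_transpose_of_trivial, ← Matrix.star_eq_conjTranspose]
  rw [spMat_star]
  exact spMat_inv_mul s τ
lemma cube_val {v : V4} (hv : v ∈ cubeSet) (k : Fin 4) : v k = 1 ∨ v k = -1 := hv k

lemma cube_ne_zero {v : V4} (hv : v ∈ cubeSet) (k : Fin 4) : v k ≠ 0 := by
  rcases hv k with h | h <;> rw [h] <;> norm_num

lemma sgn_mul_cube {b : Bool} {x : ℝ} (hx : x = 1 ∨ x = -1) :
    sgn b * x = 1 ∨ sgn b * x = -1 := by
  cases b <;> rcases hx with h | h <;> simp [sgn, h]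

lemma spMat_mem_bigG (s : Fin 4 → Bool) (τ : Equiv.Perm (Fin 4)) :
    Matrix.mulVec (spMat s τ) '' cubeSet = cubeSet := by
  ext w
  constructor
  · rintro ⟨v, hv, rfl⟩ k
    rw [spMat_mulVec]
    exact sgn_mul_cube (hv _)
  · intro hw
    refine ⟨fun i => sgn (s i) * w (τ i), fun i => sgn_mul_cube (hw _), ?_⟩
    funext k
    rw [spMat_mulVec]
    rw [← mul_assoc, sgn_mul_self, one_mul]
    simp

/-- signed permutation as an element of `bigG` -/
def spG (p : (Fin 4 → Bool) × Equiv.Perm (Fin 4)) : bigG :=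
  ⟨⟨spMat p.1 p.2, spMat_mem_orth p.1 p.2⟩, spMat_mem_bigG p.1 p.2⟩

lemma matOf_spG (p : (Fin 4 → Bool) × Equiv.Perm (Fin 4)) : matOf (spG p) = spMat p.1 p.2 := rfl

lemma spMat_injective : Function.Injective (fun p : (Fin 4 → Bool) × Equiv.Perm (Fin 4) =>
    spMat p.1 p.2) := by
  rintro ⟨s, τ⟩ ⟨s', τ'⟩ h
  simp only at h
  have hτ : τ = τ' := by
    refine Equiv.ext fun i => ?_
    by_contra hne
    have h2 := congrArg (fun M => M (τ i) i) h
    simp only [spMat, Matrix.of_apply, hne, if_pos rfl, if_false] at h2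
    exact sgn_ne_zero (s i) h2
  subst hτ
  have hs : s = s' := by
    funext i
    have h2 := congrArg (fun M => M (τ i) i) h
    simp only [spMat, Matrix.of_apply, if_pos rfl] at h2
    revert h2
    cases s i <;> cases s' i <;> simp [sgn] <;> norm_num
  rw [hs]

lemma spG_injective : Function.Injective spG := by
  intro p q h
  apply spMat_injective
  have : matOf (spG p) = matOf (spG q) := by rw [h]
  simpa [matOf_spG] using this
/-! ### Classification: every element of `bigG` is a signed permutation -/

def uAllV : V4 := fun _ => 1

lemma uAllV_mem : uAllV ∈ cubeSet := fun _ => Or.inl rfl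

def wFlipV (i : Fin 4) : V4 := Function.update uAllV i (-1)

lemma wFlipV_mem (i : Fin 4) : wFlipV i ∈ cubeSet := by
  intro k
  by_cases h : k = i
  · subst h; right; simp [wFlipV]
  · left; simp [wFlipV, Function.update_of_ne h, uAllV]

lemma bigG_image (A : bigG) : Matrix.mulVec (matOf A) '' cubeSet = cubeSet := A.2

lemma bigG_mapsTo (A : bigG) {v : V4} (hv : v ∈ cubeSet) :
    Matrix.mulVec (matOf A) v ∈ cubeSet := by
  rw [← bigG_image A]
  exact Set.mem_image_of_mem _ hv

lemma bigG_orth (A : bigG) : star (matOf A) * matOf A = 1 := by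
  rw [Matrix.star_eq_conjTranspose, Matrix.conjTranspose_eq_transpose_of_trivial]
  rw [← Matrix.mem_orthogonalGroup_iff']
  exact A.1.2

lemma bigG_orth' (A : bigG) : matOf A * star (matOf A) = 1 := by
  rw [Matrix.star_eq_conjTranspose, Matrix.conjTranspose_eq_transpose_of_trivial]
  rw [← Matrix.mem_orthogonalGroup_iff]
  exact A.1.2

lemma matOf_entry (A : bigG) (k i : Fin 4) :
    matOf A k i = (Matrix.mulVec (matOf A) uAllV k - Matrix.mulVec (matOf A) (wFlipV i) k) / 2 := by
  rw [← Pi.sub_apply, ← Matrix.mulVec_sub]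
  have h : uAllV - wFlipV i = Pi.single i (2:ℝ) := by
    funext j
    by_cases hj : j = i
    · subst hj
      simp only [Pi.sub_apply, uAllV, wFlipV, Function.update_self, Pi.single_eq_same]
      norm_num
    · simp [uAllV, wFlipV, Function.update_of_ne hj, Pi.single_eq_of_ne hj]
  rw [h, Matrix.mulVec_single]
  simp only [Pi.smul_apply, op_smul_eq_mul, Matrix.col_apply]
  ring

lemma matOf_entry_mem (A : bigG) (k i : Fin 4) :
    matOf A k i = 0 ∨ matOf A k i = 1 ∨ matOf A k i = -1 := by
  rw [matOf_entry A k i]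
  rcases bigG_mapsTo A uAllV_mem k with h1 | h1 <;>
    rcases bigG_mapsTo A (wFlipV_mem i) k with h2 | h2 <;>
    rw [h1, h2] <;> norm_num

lemma col_dot (A : bigG) (i i' : Fin 4) :
    ∑ k, matOf A k i * matOf A k i' = if i = i' then 1 else 0 := by
  have h := congrArg (fun M => M i i') (bigG_orth A)
  simpa only [Matrix.mul_apply, Matrix.star_apply, star_trivial,
    Matrix.one_apply] using h

lemma col_support_card (A : bigG) (i : Fin 4) :
    (Finset.univ.filter (fun k => matOf A k i ≠ 0)).card = 1 := by
  have h := col_dot A i i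
  simp only [if_pos rfl] at h
  have h2 : ∀ k, matOf A k i * matOf A k i = if matOf A k i ≠ 0 then 1 else 0 := by
    intro k
    rcases matOf_entry_mem A k i with h3 | h3 | h3 <;> rw [h3] <;> norm_num
  rw [Finset.sum_congr rfl fun k _ => h2 k, Finset.sum_boole] at h
  exact_mod_cast h

/-- the row index of the unique nonzero entry in column `i` -/
def permOf (A : bigG) (i : Fin 4) : Fin 4 :=
  (Finset.card_eq_one.mp (col_support_card A i)).choose

lemma permOf_spec (A : bigG) (i : Fin 4) :
    matOf A (permOf A i) i ≠ 0 ∧ ∀ k, matOf A k i ≠ 0 → k = permOf A i := by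
  have h := (Finset.card_eq_one.mp (col_support_card A i)).choose_spec
  constructor
  · have : permOf A i ∈ Finset.univ.filter (fun k => matOf A k i ≠ 0) := by
      rw [h]; exact Finset.mem_singleton_self _
    exact (Finset.mem_filter.mp this).2
  · intro k hk
    have : k ∈ Finset.univ.filter (fun k => matOf A k i ≠ 0) := by
      exact Finset.mem_filter.mpr ⟨Finset.mem_univ _, hk⟩
    rw [h] at this
    exact Finset.mem_singleton.mp this

lemma permOf_injective (A : bigG) : Function.Injective (permOf A) := by
  intro i i' hii
  by_contra hne
  have h := col_dot A i i'
  rw [if_neg hne] at h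
  rw [Finset.sum_eq_single (permOf A i)] at h
  · have h1 := (permOf_spec A i).1
    have h2 := (permOf_spec A i').1
    rw [← hii] at h2
    exact mul_ne_zero h1 h2 h
  · intro k _ hk
    have : matOf A k i = 0 := by
      by_contra hc
      exact hk ((permOf_spec A i).2 k hc)
    rw [this, zero_mul]
  · simp

/-- the permutation underlying an element of `bigG` -/
def permEquivOf (A : bigG) : Equiv.Perm (Fin 4) :=
  Equiv.ofBijective (permOf A) ((Finite.injective_iff_bijective).mp (permOf_injective A))

/-- the signs underlying an element of `bigG` -/
def signOf (A : bigG) (i : Fin 4) : Bool := decide (matOf A (permOf A i) i = 1)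

lemma matOf_eq_spMat (A : bigG) : matOf A = spMat (signOf A) (permEquivOf A) := by
  ext k i
  have hτ : permEquivOf A i = permOf A i := rfl
  unfold spMat
  simp only [Matrix.of_apply, hτ]
  by_cases hk : k = permOf A i
  · subst hk
    have h1 := (permOf_spec A i).1
    rcases matOf_entry_mem A (permOf A i) i with h | h | h
    · exact absurd h h1
    · rw [if_pos rfl, h]; simp [signOf, sgn, h]
    · rw [if_pos rfl, h]
      have hne : ¬ (matOf A (permOf A i) i = 1) := by rw [h]; norm_num
      simp [signOf, sgn, hne]
  · rw [if_neg hk]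
    by_contra hc
    exact hk ((permOf_spec A i).2 k hc)

lemma spG_surjective : Function.Surjective spG := by
  intro A
  refine ⟨(signOf A, permEquivOf A), ?_⟩
  apply Subtype.ext
  apply Subtype.ext
  exact (matOf_eq_spMat A).symm

lemma card_bigG : Nat.card bigG = 384 := by
  have e : (Fin 4 → Bool) × Equiv.Perm (Fin 4) ≃ bigG :=
    Equiv.ofBijective spG ⟨spG_injective, spG_surjective⟩
  rw [← Nat.card_congr e]
  simp only [Nat.card_eq_fintype_card, Fintype.card_prod, Fintype.card_fun,
    Fintype.card_bool, Fintype.card_fin, Fintype.card_perm]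
  norm_num [Nat.factorial]
/-! ### The action of `bigG` on `HVert` -/

def actC (A : bigG) (v : CubeV) : CubeV :=
  ⟨Matrix.mulVec (matOf A) (v : V4), bigG_mapsTo A v.2⟩

lemma actC_coe (A : bigG) (v : CubeV) :
    (actC A v : V4) = Matrix.mulVec (matOf A) (v : V4) := rfl

lemma actC_respects (A : bigG) : ∀ v w : CubeV, v ≈ w → actC A v ≈ actC A w := by
  rintro v w (h | h)
  · left
    show Matrix.mulVec (matOf A) (v : V4) = Matrix.mulVec (matOf A) (w : V4)
    rw [h]
  · right
    show Matrix.mulVec (matOf A) (v : V4) = -Matrix.mulVec (matOf A) (w : V4)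
    rw [h, Matrix.mulVec_neg]

def actH (A : bigG) : HVert → HVert :=
  Quotient.map (actC A) (actC_respects A)

lemma actH_mk (A : bigG) (v : CubeV) : actH A (⟦v⟧ : HVert) = ⟦actC A v⟧ := rfl

lemma matOf_mul (A B : bigG) : matOf (A * B) = matOf A * matOf B := rfl

lemma matOf_one : matOf (1 : bigG) = 1 := rfl

lemma matOf_inv (A : bigG) : matOf A⁻¹ = star (matOf A) := rfl

lemma actC_mul (A B : bigG) (v : CubeV) : actC (A * B) v = actC A (actC B v) := by
  apply Subtype.ext
  show Matrix.mulVec (matOf (A * B)) _ = Matrix.mulVec (matOf A) (Matrix.mulVec (matOf B) _)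
  rw [Matrix.mulVec_mulVec, matOf_mul]

lemma actC_one (v : CubeV) : actC (1 : bigG) v = v := by
  apply Subtype.ext
  show Matrix.mulVec (matOf (1 : bigG)) _ = _
  rw [matOf_one, Matrix.one_mulVec]

lemma actC_cancel (A : bigG) (v : CubeV) : actC A⁻¹ (actC A v) = v := by
  rw [← actC_mul, inv_mul_cancel, actC_one]

lemma actC_cancel' (A : bigG) (v : CubeV) : actC A (actC A⁻¹ v) = v := by
  rw [← actC_mul, mul_inv_cancel, actC_one]

lemma actH_cancel (A : bigG) (x : HVert) : actH A⁻¹ (actH A x) = x := by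
  induction x using Quotient.ind with
  | _ v => rw [actH_mk, actH_mk, actC_cancel]

lemma actH_cancel' (A : bigG) (x : HVert) : actH A (actH A⁻¹ x) = x := by
  induction x using Quotient.ind with
  | _ v => rw [actH_mk, actH_mk, actC_cancel']

lemma diffExactly_map (A : bigG) {v w : V4} {i : Fin 4} (h : diffExactly v w i) :
    diffExactly (Matrix.mulVec (matOf A) v) (Matrix.mulVec (matOf A) w)
      (permEquivOf A i) := by
  intro k
  rw [matOf_eq_spMat A, spMat_mulVec, spMat_mulVec]
  have hsgn : sgn (signOf A ((permEquivOf A).symm k)) ≠ 0 := sgn_ne_zero _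
  constructor
  · intro hne
    have h2 : v ((permEquivOf A).symm k) ≠ w ((permEquivOf A).symm k) := by
      intro hc; exact hne (by rw [hc])
    have h3 := (h _).mp h2
    rw [← h3]; simp
  · intro hk
    subst hk
    have h3 : (permEquivOf A).symm (permEquivOf A i) = i := Equiv.symm_apply_apply _ _
    rw [h3]
    have h2 : v i ≠ w i := (h i).mpr rfl
    exact fun hc => h2 (mul_left_cancel₀ (sgn_ne_zero _) hc)

lemma actH_ne (A : bigG) {x y : HVert} (h : x ≠ y) : actH A x ≠ actH A y := by
  intro hc
  apply h
  rw [← actH_cancel A x, ← actH_cancel A y, hc]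

lemma actH_adj (A : bigG) {x y : HVert} (h : H.Adj x y) : H.Adj (actH A x) (actH A y) := by
  obtain ⟨hxy, v, w, hv, hw, i, hi⟩ := h
  refine ⟨actH_ne A hxy, actC A v, actC A w, ?_, ?_, permEquivOf A i, ?_⟩
  · rw [← hv]; rfl
  · rw [← hw]; rfl
  · exact diffExactly_map A hi

/-- the graph automorphism of `H` induced by `A ∈ bigG` -/
def FA (A : bigG) : H ≃g H where
  toFun := actH A
  invFun := actH A⁻¹
  left_inv := actH_cancel A
  right_inv := actH_cancel' A
  map_rel_iff' := by
    intro x y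
    show H.Adj (actH A x) (actH A y) ↔ H.Adj x y
    constructor
    · intro h
      have h2 := actH_adj A⁻¹ h
      rwa [actH_cancel, actH_cancel] at h2
    · exact actH_adj A

lemma FA_apply (A : bigG) (x : HVert) : FA A x = actH A x := rfl

/-- the homomorphism `bigG →* Aut H` -/
def Fhom : bigG →* (H ≃g H) :=
  MonoidHom.mk' FA (by
    intro A B
    apply RelIso.ext
    intro x
    show actH (A * B) x = actH A (actH B x)
    induction x using Quotient.ind with
    | _ v => rw [actH_mk, actH_mk, actH_mk, actC_mul])

lemma Fhom_neg : Fhom negG = 1 := by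
  apply RelIso.ext
  intro x
  induction x using Quotient.ind with
  | _ v =>
    show actH negG (⟦v⟧ : HVert) = (⟦v⟧ : HVert)
    rw [actH_mk]
    apply Quotient.sound
    right
    show Matrix.mulVec (matOf negG) (v : V4) = -(v : V4)
    show Matrix.mulVec (-1 : Matrix (Fin 4) (Fin 4) ℝ) (v : V4) = -(v : V4)
    rw [Matrix.neg_mulVec, Matrix.one_mulVec]

lemma Fhom_zpowers : ∀ x ∈ Subgroup.zpowers negG, Fhom x = 1 := by
  intro x hx
  rcases Subgroup.mem_zpowers_iff.mp hx with ⟨k, rfl⟩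
  rw [map_zpow, Fhom_neg, one_zpow]

/-- the homomorphism `G/{±I} →* Aut H` -/
def fQG : QG →* (H ≃g H) := QuotientGroup.lift (Subgroup.zpowers negG) Fhom Fhom_zpowers

lemma fQG_mk (A : bigG) : fQG (QuotientGroup.mk A) = FA A := rfl
/-! ### Injectivity -/

lemma exists_third (i j : Fin 4) : ∃ k : Fin 4, k ≠ i ∧ k ≠ j := by
  revert i j; decide

lemma wFlipV_apply_ne (i k : Fin 4) (h : k ≠ i) : wFlipV i k = 1 := by
  simp [wFlipV, Function.update_of_ne h, uAllV]

lemma wFlipV_apply_self (i : Fin 4) : wFlipV i i = -1 := by simp [wFlipV]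

lemma uAllV_apply (k : Fin 4) : uAllV k = 1 := rfl

/-- if `A` fixes every antipodal class, then `A = ±1` -/
lemma trivial_action (A : bigG)
    (h : ∀ v : CubeV, Matrix.mulVec (matOf A) (v : V4) = (v : V4) ∨
      Matrix.mulVec (matOf A) (v : V4) = -(v : V4)) :
    A ∈ Subgroup.zpowers negG := by
  set M := matOf A with hM
  have hcol : ∀ k i, M k i =
      (Matrix.mulVec M uAllV k - Matrix.mulVec M (wFlipV i) k) / 2 := matOf_entry A
  have hzero : ∀ k i, k ≠ permEquivOf A i → M k i = 0 := by
    intro k i hk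
    rw [hM, matOf_eq_spMat A]
    simp [spMat, hk]
  have hu := h ⟨uAllV, uAllV_mem⟩
  have hw : ∀ i, Matrix.mulVec M (wFlipV i) = wFlipV i ∨
      Matrix.mulVec M (wFlipV i) = -(wFlipV i) := fun i => h ⟨wFlipV i, wFlipV_mem i⟩
  rcases hu with hu0 | hu0
  · have hu : Matrix.mulVec M uAllV = uAllV := hu0
    -- A u = u ; claim A wᵢ = wᵢ for all i
    have hwi : ∀ i, Matrix.mulVec M (wFlipV i) = wFlipV i := by
      intro i
      rcases hw i with h1 | h1
      · exact h1
      · exfalso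
        obtain ⟨k, hki, hkτ⟩ := exists_third i (permEquivOf A i)
        have h2 := hcol k i
        rw [hu, h1] at h2
        rw [hzero k i hkτ] at h2
        rw [uAllV_apply] at h2
        have h3 : (-(wFlipV i)) k = -1 := by
          rw [Pi.neg_apply, wFlipV_apply_ne i k hki]
        rw [h3] at h2
        norm_num at h2
    have hM1 : M = 1 := by
      ext k i
      rw [hcol k i, hu, hwi i, Matrix.one_apply]
      by_cases hk : k = i
      · subst hk; rw [uAllV_apply, wFlipV_apply_self]; norm_num
      · rw [uAllV_apply, wFlipV_apply_ne i k hk]; norm_num [hk]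
    have : A = 1 := Subtype.ext (Subtype.ext hM1)
    rw [this]; exact Subgroup.one_mem _
  · have hu : Matrix.mulVec M uAllV = -uAllV := hu0
    -- A u = -u ; claim A wᵢ = -wᵢ for all i
    have hwi : ∀ i, Matrix.mulVec M (wFlipV i) = -(wFlipV i) := by
      intro i
      rcases hw i with h1 | h1
      · exfalso
        obtain ⟨k, hki, hkτ⟩ := exists_third i (permEquivOf A i)
        have h2 := hcol k i
        rw [hu, h1] at h2
        rw [hzero k i hkτ] at h2
        have h3 : (-uAllV) k = -1 := by rw [Pi.neg_apply, uAllV_apply]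
        rw [h3, wFlipV_apply_ne i k hki] at h2
        norm_num at h2
      · exact h1
    have hM1 : M = -1 := by
      ext k i
      rw [hcol k i, hu, hwi i]
      have h4 : (-1 : Matrix (Fin 4) (Fin 4) ℝ) k i = if k = i then -1 else 0 := by
        rw [Matrix.neg_apply, Matrix.one_apply]
        by_cases hk : k = i <;> simp [hk]
      rw [h4, Pi.neg_apply, Pi.neg_apply, uAllV_apply]
      by_cases hk : k = i
      · subst hk; rw [wFlipV_apply_self]; norm_num
      · rw [wFlipV_apply_ne i k hk]; norm_num [hk]
    have : A = negG := Subtype.ext (Subtype.ext hM1)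
    rw [this]; exact Subgroup.mem_zpowers _

lemma fQG_injective : Function.Injective fQG := by
  rw [injective_iff_map_eq_one]
  intro a ha
  induction a using QuotientGroup.induction_on with
  | _ A =>
    rw [fQG_mk] at ha
    rw [QuotientGroup.eq_one_iff]
    apply trivial_action A
    intro v
    have h1 : FA A (⟦v⟧ : HVert) = (⟦v⟧ : HVert) := by rw [ha]; rfl
    have h2 : (⟦actC A v⟧ : HVert) = (⟦v⟧ : HVert) := h1
    have h3 := Quotient.exact h2
    rcases h3 with h3 | h3
    · left; exact h3
    · right; exact h3
/-! ### Direction classes -/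

lemma pm_ne {a b : ℝ} (ha : a = 1 ∨ a = -1) (hb : b = 1 ∨ b = -1) (h : a ≠ b) : a = -b := by
  rcases ha with ha | ha <;> rcases hb with hb | hb <;> simp_all <;> norm_num

lemma diffExactly_symm {v w : V4} {i : Fin 4} (h : diffExactly v w i) : diffExactly w v i :=
  fun j => by rw [← h j]; exact ne_comm

lemma diffExactly_neg_neg {v w : V4} {i : Fin 4} (h : diffExactly v w i) :
    diffExactly (-v) (-w) i := by
  intro j
  rw [← h j]
  simp only [Pi.neg_apply]
  constructor
  · intro hne hc; exact hne (by rw [hc])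
  · intro hne hc
    apply hne
    have := congrArg Neg.neg hc
    rwa [neg_neg, neg_neg] at this

lemma unique_diff {v w w' : V4} (hv : v ∈ cubeSet) (hw : w ∈ cubeSet) (hw' : w' ∈ cubeSet)
    {i : Fin 4} (h : diffExactly v w i) (h' : diffExactly v w' i) : w = w' := by
  funext j
  by_cases hj : j = i
  · subst hj
    have h1 : w j = -(v j) := pm_ne (hw j) (hv j) (Ne.symm ((h j).mpr rfl))
    have h2 : w' j = -(v j) := pm_ne (hw' j) (hv j) (Ne.symm ((h' j).mpr rfl))
    rw [h1, h2]
  · have h1 : v j = w j := by by_contra hc; exact hj ((h j).mp hc)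
    have h2 : v j = w' j := by by_contra hc; exact hj ((h' j).mp hc)
    rw [← h1, ← h2]

lemma exists_two_ne (i : Fin 4) : ∃ j1 j2 : Fin 4, j1 ≠ j2 ∧ j1 ≠ i ∧ j2 ≠ i := by
  revert i; decide

lemma not_diffExactly_neg {v w : V4} (hv : v ∈ cubeSet) (hw : w ∈ cubeSet) {i : Fin 4}
    (h : diffExactly v w i) (j : Fin 4) : ¬ diffExactly v (-w) j := by
  intro hj
  obtain ⟨j1, j2, h12, h1i, h2i⟩ := exists_two_ne i
  have key : ∀ j', j' ≠ i → j' = j := by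
    intro j' hj'
    apply (hj j').mp
    have he : v j' = w j' := by by_contra hc; exact hj' ((h j').mp hc)
    rw [Pi.neg_apply, he]
    intro hc
    rcases hw j' with h2 | h2 <;> rw [h2] at hc <;> norm_num at hc
  exact h12 ((key j1 h1i).trans (key j2 h2i).symm)

/-- negation on cube vertices -/
def negC (v : CubeV) : CubeV :=
  ⟨-(v : V4), fun i => by rcases v.2 i with h | h <;> simp [h]⟩

lemma negC_coe (v : CubeV) : (negC v : V4) = -(v : V4) := rfl

lemma mk_negC (v : CubeV) : (⟦negC v⟧ : HVert) = ⟦v⟧ := by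
  apply Quotient.sound
  right
  show -(v : V4) = -(v : V4)
  rfl

/-- flipping coordinate `i` of a cube vertex -/
def flipC (i : Fin 4) (v : CubeV) : CubeV :=
  ⟨Function.update (v : V4) i (-((v : V4) i)), by
    intro k
    by_cases hk : k = i
    · subst hk
      rw [Function.update_self]
      rcases v.2 k with h | h <;> simp [h]
    · rw [Function.update_of_ne hk]
      exact v.2 k⟩

lemma flipC_coe_self (i : Fin 4) (v : CubeV) : (flipC i v : V4) i = -((v : V4) i) :=
  Function.update_self _ _ _

lemma flipC_coe_ne (i : Fin 4) (v : CubeV) {k : Fin 4} (hk : k ≠ i) :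
    (flipC i v : V4) k = (v : V4) k := Function.update_of_ne hk _ _

lemma diffExactly_flipC (i : Fin 4) (v : CubeV) : diffExactly (v : V4) (flipC i v : V4) i := by
  intro j
  by_cases hj : j = i
  · subst hj
    rw [flipC_coe_self]
    simp only [iff_true]
    intro hc
    have := cube_ne_zero v.2 j
    rcases v.2 j with h | h <;> rw [h] at hc <;> norm_num at hc
  · rw [flipC_coe_ne i v hj]
    simp [hj]

lemma mk_flipC_ne (i : Fin 4) (v : CubeV) : (⟦v⟧ : HVert) ≠ ⟦flipC i v⟧ := by
  intro hc
  rcases Quotient.exact hc with h | h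
  · have h2 := congrFun h i
    rw [flipC_coe_self] at h2
    rcases v.2 i with h3 | h3 <;> rw [h3] at h2 <;> norm_num at h2
  · obtain ⟨j1, j2, h12, h1i, h2i⟩ := exists_two_ne i
    have h2 := congrFun h j1
    rw [Pi.neg_apply, flipC_coe_ne i v h1i] at h2
    rcases v.2 j1 with h3 | h3 <;> rw [h3] at h2 <;> norm_num at h2

lemma adj_flipC (i : Fin 4) (v : CubeV) : H.Adj (⟦v⟧ : HVert) ⟦flipC i v⟧ :=
  ⟨mk_flipC_ne i v, v, flipC i v, rfl, rfl, i, diffExactly_flipC i v⟩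

lemma flipC_mem_D (i : Fin 4) (v : CubeV) :
    s((⟦v⟧ : HVert), (⟦flipC i v⟧ : HVert)) ∈ D i :=
  ⟨(H.mem_edgeSet).mpr (adj_flipC i v), v, flipC i v, rfl, diffExactly_flipC i v⟩

lemma D_nonempty (i : Fin 4) : (D i).Nonempty :=
  ⟨_, flipC_mem_D i ⟨uAllV, uAllV_mem⟩⟩

/-- any edge of `D i` through a vertex can be written with any chosen representative first -/
lemma D_mem_rep {i : Fin 4} {e : Sym2 HVert} (he : e ∈ D i) (v0 : CubeV)
    (hx : (⟦v0⟧ : HVert) ∈ e) :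
    ∃ w : CubeV, e = s((⟦v0⟧ : HVert), (⟦w⟧ : HVert)) ∧ diffExactly (v0 : V4) (w : V4) i := by
  obtain ⟨hedge, v, w, hevw, hd⟩ := he
  rw [hevw] at hx
  have hx := Sym2.mem_iff.mp hx
  -- first reduce to the case where `⟦v0⟧` is the first coordinate
  have main : ∀ v w : CubeV, e = s((⟦v⟧ : HVert), (⟦w⟧ : HVert)) →
      diffExactly (v : V4) (w : V4) i → (⟦v0⟧ : HVert) = ⟦v⟧ →
      ∃ w' : CubeV, e = s((⟦v0⟧ : HVert), (⟦w'⟧ : HVert)) ∧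
        diffExactly (v0 : V4) (w' : V4) i := by
    intro v w hevw hd hv0
    rcases Quotient.exact hv0 with h | h
    · refine ⟨w, ?_, ?_⟩
      · rw [hevw, hv0]
      · rw [show (v0 : V4) = (v : V4) from h]
        exact hd
    · refine ⟨negC w, ?_, ?_⟩
      · rw [hevw, hv0, mk_negC]
      · rw [show (v0 : V4) = -(v : V4) from h, negC_coe]
        exact diffExactly_neg_neg hd
  rcases hx with hx | hx
  · exact main v w hevw hd hx
  · exact main w v (hevw.trans (Sym2.eq_swap)) (diffExactly_symm hd) hx

lemma D_unique_through {i : Fin 4} {e e' : Sym2 HVert} (he : e ∈ D i) (he' : e' ∈ D i)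
    {x : HVert} (hx : x ∈ e) (hx' : x ∈ e') : e = e' := by
  obtain ⟨v0, hv0⟩ := Quotient.exists_rep x
  subst hv0
  obtain ⟨w, hew, hdw⟩ := D_mem_rep he v0 hx
  obtain ⟨w', hew', hdw'⟩ := D_mem_rep he' v0 hx'
  have : (w : V4) = (w' : V4) := unique_diff v0.2 w.2 w'.2 hdw hdw'
  rw [hew, hew', Subtype.ext this]

lemma D_eq_of_mem {i j : Fin 4} {e : Sym2 HVert} (he : e ∈ D i) (he' : e ∈ D j) : i = j := by
  obtain ⟨hedge, v, w, hevw, hd⟩ := he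
  have hne : (⟦v⟧ : HVert) ≠ ⟦w⟧ := by
    have h0 : s((⟦v⟧ : HVert), (⟦w⟧ : HVert)) ∈ H.edgeSet := hevw ▸ hedge
    exact ((H.mem_edgeSet).mp h0).ne
  have hv_mem : (⟦v⟧ : HVert) ∈ e := by rw [hevw]; exact Sym2.mem_mk_left _ _
  obtain ⟨w', hew', hdw'⟩ := D_mem_rep he' v hv_mem
  rw [hevw] at hew'
  rcases Sym2.eq_iff.mp hew' with ⟨-, hww'⟩ | ⟨hvw', hwv⟩
  · rcases Quotient.exact hww' with h | h
    · have h2 : (w' : V4) = (w : V4) := h.symm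
      rw [h2] at hdw'
      exact (hdw' i).mp ((hd i).mpr rfl)
    · exfalso
      have h2 : (w' : V4) = -(w : V4) := by
        have h3 : (w : V4) = -(w' : V4) := h
        rw [h3, neg_neg]
      rw [h2] at hdw'
      exact not_diffExactly_neg v.2 w.2 hd j hdw'
  · exact absurd hwv.symm hne
/-! ### Image of direction classes -/

lemma diffExactly_map' (A : bigG) {s : Fin 4 → Bool} {τ : Equiv.Perm (Fin 4)}
    (hA : matOf A = spMat s τ) {v w : V4} {i : Fin 4} (h : diffExactly v w i) :
    diffExactly (Matrix.mulVec (matOf A) v) (Matrix.mulVec (matOf A) w) (τ i) := by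
  intro k
  rw [hA, spMat_mulVec, spMat_mulVec]
  constructor
  · intro hne
    have h2 : v (τ.symm k) ≠ w (τ.symm k) := by
      intro hc; exact hne (by rw [hc])
    have h3 := (h _).mp h2
    rw [← h3]; simp
  · intro hk
    subst hk
    rw [Equiv.symm_apply_apply]
    have h2 : v i ≠ w i := (h i).mpr rfl
    exact fun hc => h2 (mul_left_cancel₀ (sgn_ne_zero _) hc)

lemma image_D_subset (A : bigG) {s : Fin 4 → Bool} {τ : Equiv.Perm (Fin 4)}
    (hA : matOf A = spMat s τ) (i : Fin 4) :
    Sym2.map (actH A) '' D i ⊆ D (τ i) := by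
  rintro e' ⟨e, he, rfl⟩
  obtain ⟨hedge, v, w, hevw, hd⟩ := he
  subst hevw
  change s(actH A (⟦v⟧ : HVert), actH A (⟦w⟧ : HVert)) ∈ D (τ i)
  have hadj : H.Adj (⟦v⟧ : HVert) ⟦w⟧ := (H.mem_edgeSet).mp hedge
  refine ⟨?_, actC A v, actC A w, rfl, ?_⟩
  · exact (H.mem_edgeSet).mpr (actH_adj A hadj)
  · exact diffExactly_map' A hA hd

lemma matOf_inv_spMat (A : bigG) {s : Fin 4 → Bool} {τ : Equiv.Perm (Fin 4)}
    (hA : matOf A = spMat s τ) :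
    matOf A⁻¹ = spMat (fun j => s (τ.symm j)) τ⁻¹ := by
  rw [matOf_inv, hA, spMat_star]

lemma image_D_eq (A : bigG) {s : Fin 4 → Bool} {τ : Equiv.Perm (Fin 4)}
    (hA : matOf A = spMat s τ) (i : Fin 4) :
    Sym2.map ⇑(FA A) '' D i = D (τ i) := by
  have hco : ⇑(FA A) = actH A := rfl
  rw [hco]
  apply Set.Subset.antisymm
  · exact image_D_subset A hA i
  · intro e' he'
    have h2 : Sym2.map (actH A⁻¹) e' ∈ D ((τ⁻¹ : Equiv.Perm (Fin 4)) (τ i)) :=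
      image_D_subset A⁻¹ (matOf_inv_spMat A hA) (τ i) ⟨e', he', rfl⟩
    have h3 : (τ⁻¹ : Equiv.Perm (Fin 4)) (τ i) = i := by simp
    rw [h3] at h2
    refine ⟨Sym2.map (actH A⁻¹) e', h2, ?_⟩
    induction e' using Sym2.ind with
    | _ a b => rw [Sym2.map_pair_eq, Sym2.map_pair_eq, actH_cancel', actH_cancel']
/-! ### Rigidity: automorphisms preserving directions are determined by one value -/

def uC : CubeV := ⟨uAllV, uAllV_mem⟩

lemma auto_step (φ ψ : H ≃g H) (σ : Fin 4 → Fin 4)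
    (hφ : ∀ i, Sym2.map ⇑φ '' D i = D (σ i)) (hψ : ∀ i, Sym2.map ⇑ψ '' D i = D (σ i))
    (v : CubeV) (hv : φ (⟦v⟧ : HVert) = ψ (⟦v⟧ : HVert)) (i : Fin 4) :
    φ (⟦flipC i v⟧ : HVert) = ψ (⟦flipC i v⟧ : HVert) := by
  have he := flipC_mem_D i v
  have h1 : Sym2.map ⇑φ s((⟦v⟧ : HVert), (⟦flipC i v⟧ : HVert)) ∈ D (σ i) := by
    rw [← hφ i]; exact ⟨_, he, rfl⟩
  have h2 : Sym2.map ⇑ψ s((⟦v⟧ : HVert), (⟦flipC i v⟧ : HVert)) ∈ D (σ i) := by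
    rw [← hψ i]; exact ⟨_, he, rfl⟩
  change s(φ (⟦v⟧ : HVert), φ (⟦flipC i v⟧ : HVert)) ∈ D (σ i) at h1
  change s(ψ (⟦v⟧ : HVert), ψ (⟦flipC i v⟧ : HVert)) ∈ D (σ i) at h2
  have hmem1 : φ (⟦v⟧ : HVert) ∈ s(φ (⟦v⟧ : HVert), φ (⟦flipC i v⟧ : HVert)) :=
    Sym2.mem_mk_left _ _
  have hmem2 : φ (⟦v⟧ : HVert) ∈ s(ψ (⟦v⟧ : HVert), ψ (⟦flipC i v⟧ : HVert)) := by
    rw [hv]; exact Sym2.mem_mk_left _ _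
  have heq := D_unique_through h1 h2 hmem1 hmem2
  rcases Sym2.eq_iff.mp heq with ⟨-, h4⟩ | ⟨h3, h4⟩
  · exact h4
  · have h5 : ψ (⟦flipC i v⟧ : HVert) = ψ (⟦v⟧ : HVert) := by rw [← h3, hv]
    have h6 : (⟦flipC i v⟧ : HVert) = ⟦v⟧ := ψ.injective h5
    exact absurd h6.symm (mk_flipC_ne i v)

lemma flipC_flipC (i : Fin 4) (v : CubeV) : flipC i (flipC i v) = v := by
  apply Subtype.ext
  funext k
  by_cases hk : k = i
  · subst hk
    rw [flipC_coe_self, flipC_coe_self, neg_neg]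
  · rw [flipC_coe_ne _ _ hk, flipC_coe_ne _ _ hk]

lemma auto_agree (φ ψ : H ≃g H) (σ : Fin 4 → Fin 4)
    (hφ : ∀ i, Sym2.map ⇑φ '' D i = D (σ i)) (hψ : ∀ i, Sym2.map ⇑ψ '' D i = D (σ i))
    (h0 : φ (⟦uC⟧ : HVert) = ψ (⟦uC⟧ : HVert)) : φ = ψ := by
  have main : ∀ (n : ℕ) (w : CubeV),
      (Finset.univ.filter (fun k => (w : V4) k ≠ 1)).card = n →
      φ (⟦w⟧ : HVert) = ψ (⟦w⟧ : HVert) := by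
    intro n
    induction n with
    | zero =>
      intro w hw
      have hall : ∀ k, (w : V4) k = 1 := by
        intro k
        by_contra hc
        have : k ∈ Finset.univ.filter (fun k => (w : V4) k ≠ 1) := by
          simp [hc]
        rw [Finset.card_eq_zero.mp hw] at this
        exact absurd this (Finset.notMem_empty k)
      have : w = uC := Subtype.ext (funext hall)
      rw [this]; exact h0
    | succ n ih =>
      intro w hw
      have hne : (Finset.univ.filter (fun k => (w : V4) k ≠ 1)).Nonempty := by
        rw [← Finset.card_pos, hw]; omega
      obtain ⟨i, hi⟩ := hne
      have hwi : (w : V4) i ≠ 1 := (Finset.mem_filter.mp hi).2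
      have hwi' : (w : V4) i = -1 := by
        rcases w.2 i with h | h
        · exact absurd h hwi
        · exact h
      set w' := flipC i w with hw'
      have hcard : (Finset.univ.filter (fun k => (w' : V4) k ≠ 1)).card = n := by
        have hset : Finset.univ.filter (fun k => (w' : V4) k ≠ 1) =
            (Finset.univ.filter (fun k => (w : V4) k ≠ 1)).erase i := by
          ext k
          by_cases hk : k = i
          · subst hk
            have : (w' : V4) k = 1 := by
              rw [hw', flipC_coe_self, hwi']; norm_num
            simp [this]
          · rw [Finset.mem_erase]
            have : (w' : V4) k = (w : V4) k := flipC_coe_ne i w hk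
            simp [this, hk]
        rw [hset, Finset.card_erase_of_mem hi, hw]
        omega
      have hagree' := ih w' hcard
      have hflip : flipC i w' = w := flipC_flipC i w
      have := auto_step φ ψ σ hφ hψ w' hagree' i
      rwa [hflip] at this
  apply RelIso.ext
  intro x
  obtain ⟨w, rfl⟩ := Quotient.exists_rep x
  exact main _ w rfl

/-! ### Surjectivity onto direction-preserving automorphisms -/

lemma range_fQG :
    Set.range ⇑fQG = {φ : H ≃g H | ∀ i : Fin 4, ∃ j : Fin 4, Sym2.map ⇑φ '' D i = D j} := by
  apply Set.Subset.antisymm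
  · rintro φ ⟨q, rfl⟩
    induction q using QuotientGroup.induction_on with
    | _ A =>
      intro i
      refine ⟨permEquivOf A i, ?_⟩
      rw [fQG_mk]
      exact image_D_eq A (matOf_eq_spMat A) i
  · intro φ hφ
    set σ0 : Fin 4 → Fin 4 := fun i => (hφ i).choose with hσ0def
    have hσ0 : ∀ i, Sym2.map ⇑φ '' D i = D (σ0 i) := fun i => (hφ i).choose_spec
    have hinj : Function.Injective σ0 := by
      intro i i' hii
      have h1 : Sym2.map ⇑φ '' D i = Sym2.map ⇑φ '' D i' := by
        rw [hσ0 i, hσ0 i', hii]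
      have h2 : D i = D i' :=
        Set.image_injective.mpr (Sym2.map.injective φ.injective) h1
      obtain ⟨e, he⟩ := D_nonempty i
      exact D_eq_of_mem he (h2 ▸ he)
    set σ : Equiv.Perm (Fin 4) :=
      Equiv.ofBijective σ0 ((Finite.injective_iff_bijective).mp hinj) with hσdef
    have hσ : ∀ i, Sym2.map ⇑φ '' D i = D (σ i) := hσ0
    obtain ⟨v0, hv0⟩ := Quotient.exists_rep (φ (⟦uC⟧ : HVert))
    set s : Fin 4 → Bool := fun j => decide ((v0 : V4) (σ j) = 1) with hsdef
    set A : bigG := spG (s, σ) with hAdef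
    have hA : matOf A = spMat s σ := rfl
    have hAu : actC A uC = v0 := by
      apply Subtype.ext
      show Matrix.mulVec (matOf A) (uC : V4) = (v0 : V4)
      funext k
      rw [hA, spMat_mulVec]
      have hu1 : (uC : V4) (σ.symm k) = 1 := rfl
      rw [hu1, mul_one]
      have hk : σ (σ.symm k) = k := Equiv.apply_symm_apply _ _
      rcases v0.2 k with h | h
      · have : s (σ.symm k) = true := by
          rw [hsdef]; simp only [hk]; simp [h]
        rw [this, h]; rfl
      · have : s (σ.symm k) = false := by
          rw [hsdef]; simp only [hk]; simp [h]; norm_num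
        rw [this, h]; rfl
    have hFA : ∀ i, Sym2.map ⇑(FA A) '' D i = D (σ i) := fun i => image_D_eq A hA i
    have h0 : FA A (⟦uC⟧ : HVert) = φ (⟦uC⟧ : HVert) := by
      rw [← hv0]
      show (⟦actC A uC⟧ : HVert) = ⟦v0⟧
      rw [hAu]
    have : FA A = φ := auto_agree (FA A) φ σ hFA hσ h0
    exact ⟨QuotientGroup.mk A, by rw [fQG_mk, this]⟩

/-- `G = {A ∈ O(4,ℝ) : A·{-1,1}^4 = {-1,1}^4}` has order 384; the natural
action of `G/{±I}` on the vertices of `H` gives an injective group homomorphism from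
`G/{±I}` into the automorphism group of `H`, whose image is exactly the set of
automorphisms of `H` inducing a permutation of the direction classes. -/
theorem stmt_5 :
    Nat.card bigG = 384 ∧
    ∃ f : QG →* (H ≃g H),
      IsNaturalAction f ∧
      Function.Injective f ∧
      Set.range ⇑f = {φ : H ≃g H | ∀ i : Fin 4, ∃ j : Fin 4, Sym2.map ⇑φ '' D i = D j} := by
  refine ⟨card_bigG, fQG, ?_, fQG_injective, range_fQG⟩
  intro A v
  exact ⟨actC A v, rfl, rfl⟩
end
end

section
/- A partition of the edge set of H into four perfect matchings is a chiral partition (each matching contains exactly one edge of each direction class) if and only if every 4-cycle of H whose edge set is contained in D_i ∪ D_j for some pair of distinct indices i ≠ j contains exactly one edge from each of the four matchings. -/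
open scoped Classical

noncomputable section

section ChiralAuxSection

namespace ChiralAux

/-! ### flipping coordinates of cube vertices -/

def flipC (i : Fin 4) (v : CubeV) : CubeV :=
  ⟨Function.update (v : V4) i (-(v : V4) i), by
    intro j
    rcases eq_or_ne j i with rfl | h
    · rcases v.2 j with h | h <;> simp [Function.update_self, h]
    · simpa [Function.update_of_ne h] using v.2 j⟩

lemma flipC_apply_self (i : Fin 4) (v : CubeV) :
    (flipC i v : V4) i = -(v : V4) i := by simp [flipC]

lemma flipC_apply_ne (i : Fin 4) (v : CubeV) {j : Fin 4} (h : j ≠ i) :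
    (flipC i v : V4) j = (v : V4) j := by simp [flipC, Function.update_of_ne h]

lemma flipC_flipC (i : Fin 4) (v : CubeV) : flipC i (flipC i v) = v := by
  apply Subtype.ext; funext j
  rcases eq_or_ne j i with rfl | h
  · rw [flipC_apply_self, flipC_apply_self, neg_neg]
  · rw [flipC_apply_ne _ _ h, flipC_apply_ne _ _ h]

lemma flipC_apply (i : Fin 4) (v : CubeV) (l : Fin 4) :
    (flipC i v : V4) l = if l = i then -(v : V4) l else (v : V4) l := by
  rcases eq_or_ne l i with rfl | h
  · simp [flipC_apply_self]
  · simp [flipC_apply_ne _ _ h, h]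

lemma flipC_comm (i j : Fin 4) (v : CubeV) :
    flipC i (flipC j v) = flipC j (flipC i v) := by
  apply Subtype.ext; funext l
  simp only [flipC_apply]
  split_ifs <;> ring

lemma diffExactly_flipC (i : Fin 4) (v : CubeV) :
    diffExactly (v : V4) (flipC i v : V4) i := by
  intro j
  rcases eq_or_ne j i with rfl | h
  · rw [flipC_apply_self]
    simp only [iff_true]
    rcases v.2 j with h | h <;> rw [h] <;> norm_num
  · rw [flipC_apply_ne _ _ h]
    simp [h]

/-! ### the Bool model -/

def toB (v : CubeV) : Fin 4 → Bool := fun i => if (v : V4) i = 1 then true else false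

def ofB (b : Fin 4 → Bool) : CubeV :=
  ⟨fun i => if b i then 1 else -1, by intro i; by_cases h : b i <;> simp [h]⟩

def bflip (i : Fin 4) (b : Fin 4 → Bool) : Fin 4 → Bool :=
  fun j => if j = i then !(b j) else b j

def dvec (a b : Fin 4 → Bool) : Fin 4 → Bool := fun n => a n != b n

def zv : Fin 4 → Bool := fun _ => false
def ov : Fin 4 → Bool := fun _ => true

def brel (a b : Fin 4 → Bool) : Prop := dvec a b = zv ∨ dvec a b = ov

lemma dvec_self (b : Fin 4 → Bool) : dvec b b = zv := by
  funext n; simp [dvec, zv]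

lemma dvec_flip_right (a b : Fin 4 → Bool) (j : Fin 4) :
    dvec a (bflip j b) = bflip j (dvec a b) := by
  funext n
  by_cases h : n = j <;> simp [dvec, bflip, h] <;> cases a n <;> cases b n <;> rfl

lemma dvec_flip_left (a b : Fin 4 → Bool) (j : Fin 4) :
    dvec (bflip j a) b = bflip j (dvec a b) := by
  funext n
  by_cases h : n = j <;> simp [dvec, bflip, h] <;> cases a n <;> cases b n <;> rfl

lemma toB_ofB (b : Fin 4 → Bool) : toB (ofB b) = b := by
  funext i
  cases h : b i <;> simp [toB, ofB, h] <;> norm_num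

lemma toB_flipC (i : Fin 4) (v : CubeV) : toB (flipC i v) = bflip i (toB v) := by
  funext j
  rcases eq_or_ne j i with rfl | h
  · rcases v.2 j with h1 | h1 <;>
      simp [toB, bflip, flipC_apply_self, h1] <;> norm_num
  · simp [toB, bflip, flipC_apply_ne _ _ h, h]

lemma toB_eq_iff (v w : CubeV) : (v : V4) = (w : V4) ↔ toB v = toB w := by
  constructor
  · intro h; funext i; simp [toB, h]
  · intro h
    have h1 : (v : V4) = ((⟨(w : V4), w.2⟩ : CubeV) : V4) := by
      funext i
      have hi := congrFun h i
      rcases v.2 i with h1 | h1 <;> rcases w.2 i with h2 | h2 <;>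
        simp [toB, h1, h2] at hi ⊢ <;> norm_num at hi
    simpa using h1

lemma toB_neg_iff (v w : CubeV) :
    (v : V4) = -(w : V4) ↔ toB v = dvec (toB w) ov := by
  constructor
  · intro h; funext i
    have hi := congrFun h i
    rcases w.2 i with h2 | h2 <;> simp [toB, dvec, ov, hi, h2] <;> norm_num
  · intro h
    funext i
    have hi := congrFun h i
    rcases v.2 i with h1 | h1 <;> rcases w.2 i with h2 | h2 <;>
      simp [toB, dvec, ov, h1, h2] at hi ⊢ <;> norm_num at hi ⊢

lemma quot_eq_iff (v w : CubeV) :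
    ((⟦v⟧ : HVert) = ⟦w⟧) ↔ brel (toB v) (toB w) := by
  rw [Quotient.eq]
  show ((v : V4) = (w : V4) ∨ (v : V4) = -(w : V4)) ↔ _
  rw [toB_eq_iff, toB_neg_iff]
  unfold brel
  constructor
  · rintro (h | h)
    · left; rw [h, dvec_self]
    · right; rw [h]; funext n; cases toB w n <;> simp [dvec, ov]
  · rintro (h | h)
    · left; funext n
      have := congrFun h n
      cases h1 : toB v n <;> cases h2 : toB w n <;> simp [dvec, zv, h1, h2] at this ⊢
    · right; funext n
      have := congrFun h n
      cases h1 : toB v n <;> cases h2 : toB w n <;>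
        simp [dvec, ov, zv, h1, h2] at this ⊢

end ChiralAux
namespace ChiralAux

/-! ### decidable cores -/

lemma core_one (i : Fin 4) : ¬ (bflip i zv = zv ∨ bflip i zv = ov) := by
  revert i; decide

lemma core_two (i j : Fin 4)
    (h : bflip j (bflip i zv) = zv ∨ bflip j (bflip i zv) = ov) : i = j := by
  revert i j; decide

lemma core_three (i j : Fin 4) (hij : i ≠ j) :
    ¬ (bflip j (bflip i (bflip j zv)) = zv ∨ bflip j (bflip i (bflip j zv)) = ov) := by
  revert i j; decide

lemma core_pos (i : Fin 4) (d : Fin 4 → Bool)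
    (h0 : ¬ (d = zv ∨ d = ov)) (h1 : ¬ (bflip i d = zv ∨ bflip i d = ov)) :
    ∃ j, j ≠ i ∧ ((bflip j d = zv ∨ bflip j d = ov) ∨
      (bflip i (bflip j d) = zv ∨ bflip i (bflip j d) = ov)) := by
  revert i d; decide

lemma bflip_bflip (i : Fin 4) (d : Fin 4 → Bool) : bflip i (bflip i d) = d := by
  funext n; by_cases h : n = i <;> simp [bflip, h]

/-! ### quotient-level distinctness lemmas -/

lemma quot_ne_flip (i : Fin 4) (v : CubeV) : (⟦v⟧ : HVert) ≠ ⟦flipC i v⟧ := by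
  rw [Ne, quot_eq_iff, toB_flipC, brel, dvec_flip_right, dvec_self]
  exact core_one i

lemma quot_flip_eq_flip {i j : Fin 4} {v : CubeV}
    (h : (⟦flipC i v⟧ : HVert) = ⟦flipC j v⟧) : i = j := by
  rw [quot_eq_iff, toB_flipC, toB_flipC, brel, dvec_flip_left, dvec_flip_right,
    dvec_self] at h
  exact (core_two j i h).symm

lemma quot_ne_flip_flip {i j : Fin 4} (hij : i ≠ j) (v : CubeV) :
    (⟦v⟧ : HVert) ≠ ⟦flipC i (flipC j v)⟧ := by
  rw [Ne, quot_eq_iff, toB_flipC, toB_flipC, brel, dvec_flip_right, dvec_flip_right,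
    dvec_self]
  intro h
  exact hij (core_two j i h).symm

lemma quot_flip_cong (i : Fin 4) {u w : CubeV}
    (h : (⟦u⟧ : HVert) = ⟦w⟧) : (⟦flipC i u⟧ : HVert) = ⟦flipC i w⟧ := by
  rw [quot_eq_iff, toB_flipC, toB_flipC, brel, dvec_flip_left, dvec_flip_right,
    bflip_bflip]
  rw [quot_eq_iff, brel] at h
  exact h

/-! ### adjacency and direction classes -/

lemma adj_flipC (i : Fin 4) (v : CubeV) : H.Adj ⟦v⟧ ⟦flipC i v⟧ :=
  ⟨quot_ne_flip i v, v, flipC i v, rfl, rfl, i, diffExactly_flipC i v⟩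

lemma D_mem_iff {e : Sym2 HVert} {i : Fin 4} :
    e ∈ D i ↔ ∃ v : CubeV, e = s((⟦v⟧ : HVert), (⟦flipC i v⟧ : HVert)) := by
  constructor
  · rintro ⟨he, v, w, rfl, hd⟩
    refine ⟨v, ?_⟩
    have hw : w = flipC i v := by
      apply Subtype.ext; funext j
      rcases eq_or_ne j i with rfl | h
      · rw [flipC_apply_self]
        have hne : (v : V4) j ≠ (w : V4) j := (hd j).2 rfl
        rcases v.2 j with h1 | h1 <;> rcases w.2 j with h2 | h2 <;>
          rw [h1, h2] at hne ⊢ <;> norm_num at hne <;> norm_num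
      · rw [flipC_apply_ne _ _ h]
        by_contra hne
        exact h ((hd j).1 (Ne.symm hne))
    rw [hw]
  · rintro ⟨v, rfl⟩
    exact ⟨(H.mem_edgeSet).2 (adj_flipC i v), v, flipC i v, rfl, diffExactly_flipC i v⟩

lemma edge_class {e : Sym2 HVert} (he : e ∈ H.edgeSet) : ∃ i, e ∈ D i := by
  induction e with
  | _ x y =>
    obtain ⟨hne, v, w, hv, hw, i, hd⟩ := (H.mem_edgeSet).1 he
    exact ⟨i, he, v, w, by subst hv; subst hw; rfl, hd⟩

lemma class_unique {e : Sym2 HVert} {i j : Fin 4}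
    (hi : e ∈ D i) (hj : e ∈ D j) : i = j := by
  obtain ⟨v, rfl⟩ := D_mem_iff.1 hi
  obtain ⟨u, hu⟩ := D_mem_iff.1 hj
  have hu := Sym2.eq_iff.1 hu
  rcases hu with ⟨h1, h2⟩ | ⟨h1, h2⟩
  · have := quot_flip_cong i h1
    rw [h2] at this
    exact (quot_flip_eq_flip this).symm
  · by_contra hne
    exact quot_ne_flip_flip hne u (h2.symm.trans (quot_flip_cong i h1))

lemma vertex_unique {e f : Sym2 HVert} {i : Fin 4} {x : HVert}
    (he : e ∈ D i) (hf : f ∈ D i) (hxe : x ∈ e) (hxf : x ∈ f) : e = f := by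
  obtain ⟨v, rfl⟩ := D_mem_iff.1 he
  obtain ⟨u, rfl⟩ := D_mem_iff.1 hf
  replace hxe := Sym2.mem_iff.1 hxe; replace hxf := Sym2.mem_iff.1 hxf
  have main : ∀ (h : (⟦v⟧ : HVert) = ⟦u⟧ ∨ (⟦v⟧ : HVert) = ⟦flipC i u⟧),
      s((⟦v⟧ : HVert), (⟦flipC i v⟧ : HVert)) = s((⟦u⟧ : HVert), (⟦flipC i u⟧ : HVert)) := by
    rintro (h | h)
    · rw [h, quot_flip_cong i h]
    · have h2 := quot_flip_cong i h
      rw [flipC_flipC] at h2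
      rw [h, h2, Sym2.eq_swap]
  rcases hxe with rfl | rfl
  · exact main (by tauto)
  · rcases hxf with h | h
    · have h2 := quot_flip_cong i h
      rw [flipC_flipC] at h2
      exact main (Or.inr h2)
    · have h2 := quot_flip_cong i h
      rw [flipC_flipC, flipC_flipC] at h2
      exact main (Or.inl h2)

end ChiralAux
namespace ChiralAux

/-! ### cardinality of `HVert` -/

instance bsetoid : Setoid (Fin 4 → Bool) where
  r a b := brel a b
  iseqv := by
    constructor
    · intro a; left; exact dvec_self a
    · intro a b h
      rcases h with h | h
      · left; funext n
        have := congrFun h n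
        cases h1 : a n <;> cases h2 : b n <;> simp [dvec, zv, h1, h2] at this ⊢
      · right; funext n
        have := congrFun h n
        cases h1 : a n <;> cases h2 : b n <;> simp [dvec, ov, h1, h2] at this ⊢
    · intro a b c h1 h2
      rcases h1 with h1 | h1 <;> rcases h2 with h2 | h2 <;>
        [left; right; right; left] <;> funext n <;>
        have e1 := congrFun h1 n <;> have e2 := congrFun h2 n <;>
        cases ha : a n <;> cases hb : b n <;> cases hc : c n <;>
          simp [dvec, zv, ov, ha, hb, hc] at e1 e2 ⊢

instance : DecidableRel (fun a b : Fin 4 → Bool => brel a b) := fun a b =>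
  inferInstanceAs (Decidable (_ ∨ _))

instance : DecidableRel ((· ≈ ·) : (Fin 4 → Bool) → (Fin 4 → Bool) → Prop) := fun a b =>
  inferInstanceAs (Decidable (_ ∨ _))

def cubeEquiv : (Fin 4 → Bool) ≃ CubeV where
  toFun := ofB
  invFun := toB
  left_inv := toB_ofB
  right_inv := by
    intro v
    apply Subtype.ext
    exact ((toB_eq_iff (ofB (toB v)) v).2 (toB_ofB (toB v)))

def hvertEquiv : Quotient bsetoid ≃ HVert :=
  Quotient.congr cubeEquiv (by
    intro a b
    constructor
    · intro h
      exact Quotient.exact ((quot_eq_iff (cubeEquiv a) (cubeEquiv b)).2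
        (by simpa [cubeEquiv, toB_ofB] using (show brel a b from h)))
    · intro h
      have := (quot_eq_iff (cubeEquiv a) (cubeEquiv b)).1 (Quotient.sound h)
      show brel a b
      simpa [cubeEquiv, toB_ofB] using this)

instance : Fintype HVert := Fintype.ofEquiv _ hvertEquiv

lemma card_HVert : Fintype.card HVert = 8 := by
  rw [← Fintype.card_congr hvertEquiv]
  decide

/-! ### building 4-cycles -/

lemma cycle4 {a b c d : HVert} (hab : H.Adj a b) (hbc : H.Adj b c)
    (hcd : H.Adj c d) (hda : H.Adj d a) (hac : a ≠ c) (hbd : b ≠ d) :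
    ∃ p : H.Walk a a, p.IsCycle ∧ p.length = 4 ∧
      p.edges = [s(a, b), s(b, c), s(c, d), s(d, a)] := by
  refine ⟨.cons hab (.cons hbc (.cons hcd (.cons hda .nil))), ?_, rfl, rfl⟩
  have h1 := hab.ne
  have h2 := hbc.ne
  have h3 := hcd.ne
  have h4 := hda.ne
  constructor
  · constructor
    · constructor
      simp only [SimpleGraph.Walk.edges_cons, SimpleGraph.Walk.edges_nil,
        List.nodup_cons, List.mem_cons, List.not_mem_nil, List.nodup_nil,
        Sym2.eq_iff, or_false, and_true, not_or]
      refine ⟨⟨?_, ?_, ?_⟩, ⟨?_, ?_⟩, ?_⟩ <;> tauto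
    · simp
  · simp only [SimpleGraph.Walk.support_cons, SimpleGraph.Walk.support_nil,
      List.tail_cons, List.nodup_cons, List.mem_cons, List.not_mem_nil,
      List.nodup_nil, or_false, and_true, not_or]
    refine ⟨⟨?_, ?_, ?_⟩, ⟨?_, ?_⟩, ?_⟩ <;> tauto

/-- two distinct edges of the same direction class sit on a common bicolored
4-cycle -/
lemma common_cycle {c : Fin 4} {e f : Sym2 HVert} (hec : e ∈ D c) (hfc : f ∈ D c)
    (hef : e ≠ f) (hdisj : ∀ x, x ∈ e → x ∈ f → False) :
    ∃ (j : Fin 4) (x : HVert) (p : H.Walk x x), j ≠ c ∧ p.IsCycle ∧ p.length = 4 ∧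
      e ∈ p.edges ∧ f ∈ p.edges ∧ ∀ g ∈ p.edges, g ∈ D c ∪ D j := by
  obtain ⟨v, rfl⟩ := D_mem_iff.1 hec
  obtain ⟨u, rfl⟩ := D_mem_iff.1 hfc
  -- `u` is not equivalent to `v` or `flipC c v`
  have hu1 : ¬ brel (toB u) (toB v) := by
    intro h
    exact hdisj ⟦u⟧ (Sym2.mem_iff.2 (by left; exact (quot_eq_iff u v).2 h))
      (Sym2.mem_iff.2 (by left; rfl))
  have hu2 : ¬ brel (toB u) (toB (flipC c v)) := by
    intro h
    exact hdisj ⟦u⟧ (Sym2.mem_iff.2 (by right; exact (quot_eq_iff u (flipC c v)).2 h))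
      (Sym2.mem_iff.2 (by left; rfl))
  simp only [brel] at hu1 hu2
  rw [toB_flipC, dvec_flip_right] at hu2
  obtain ⟨j, hjc, hj⟩ := core_pos c (dvec (toB u) (toB v)) hu1 hu2
  -- translate back: ⟦u⟧ = ⟦flipC j v⟧ or ⟦u⟧ = ⟦flipC c (flipC j v)⟧
  have hj' : (⟦u⟧ : HVert) = ⟦flipC j v⟧ ∨ (⟦u⟧ : HVert) = ⟦flipC c (flipC j v)⟧ := by
    rcases hj with h | h
    · left
      rw [quot_eq_iff, toB_flipC, brel, dvec_flip_right]
      exact h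
    · right
      rw [quot_eq_iff, toB_flipC, toB_flipC, brel, dvec_flip_right, dvec_flip_right]
      exact h
  have hf' : s((⟦u⟧ : HVert), (⟦flipC c u⟧ : HVert))
      = s((⟦flipC j v⟧ : HVert), (⟦flipC c (flipC j v)⟧ : HVert)) := by
    rcases hj' with h | h
    · rw [h, quot_flip_cong c h]
    · have h2 := quot_flip_cong c h
      rw [flipC_flipC] at h2
      rw [h, h2, Sym2.eq_swap]
  -- build the cycle v → flipC c v → flipC j (flipC c v) → flipC j v → v
  have hv2 : (⟦flipC j (flipC c v)⟧ : HVert) = ⟦flipC c (flipC j v)⟧ := by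
    rw [flipC_comm]
  obtain ⟨p, hcyc, hlen, hedges⟩ := cycle4 (a := ⟦v⟧) (b := ⟦flipC c v⟧)
    (c := ⟦flipC j (flipC c v)⟧) (d := ⟦flipC j v⟧)
    (adj_flipC c v)
    (adj_flipC j (flipC c v))
    (by rw [hv2]; exact (adj_flipC c (flipC j v)).symm)
    ((adj_flipC j v).symm)
    (quot_ne_flip_flip hjc v)
    (by
      intro h
      replace h := (quot_eq_iff _ _).1 h
      rw [toB_flipC, toB_flipC, brel, dvec_flip_left, dvec_flip_right,
        dvec_self] at h
      exact hjc (core_two j c h))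
  refine ⟨j, ⟦v⟧, p, hjc, hcyc, hlen, ?_, ?_, ?_⟩
  · rw [hedges]; exact List.mem_cons_self
  · rw [hedges, hf']
    exact List.mem_cons.2 (Or.inr (List.mem_cons.2 (Or.inr (List.mem_cons.2 (Or.inl (by
    rw [hv2]
    exact Sym2.eq_swap))))))
  · intro g hg
    rw [hedges] at hg
    simp only [List.mem_cons, List.not_mem_nil, or_false] at hg
    rcases hg with rfl | rfl | rfl | rfl
    · exact Or.inl (D_mem_iff.2 ⟨v, rfl⟩)
    · exact Or.inr (D_mem_iff.2 ⟨flipC c v, rfl⟩)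
    · exact Or.inl (D_mem_iff.2 ⟨flipC j v, by rw [hv2]; exact Sym2.eq_swap⟩)
    · exact Or.inr (D_mem_iff.2 ⟨v, Sym2.eq_swap⟩)
  
end ChiralAux

end ChiralAuxSection

open ChiralAux

/-- a partition of the edge set of `H` into four perfect matchings is a
chiral partition if and only if every 4-cycle of `H` whose edge set is contained in
`D i ∪ D j` for some `i ≠ j` contains exactly one edge from each of the four
matchings. -/
theorem stmt_8 :
    ∀ M : Fin 4 → Set (Sym2 HVert),
      (∀ k, IsPM H (M k)) →
      (∀ e ∈ H.edgeSet, ∃! k, e ∈ M k) →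
      ((∀ k i, ∃! e, e ∈ M k ∧ e ∈ D i) ↔
        ∀ (v : HVert) (p : H.Walk v v), p.IsCycle → p.length = 4 →
          (∃ i j : Fin 4, i ≠ j ∧ ∀ e ∈ p.edges, e ∈ D i ∪ D j) →
          ∀ k, ∃! e, e ∈ p.edges ∧ e ∈ M k) := by

  intro M hPM hPart
  have share : ∀ (k : Fin 4) (x : HVert) (e f : Sym2 HVert),
      e ∈ M k → f ∈ M k → x ∈ e → x ∈ f → e = f := by
    intro k x e f he hf hxe hxf
    obtain ⟨w, -, hu⟩ := (hPM k).2 x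
    exact (hu e ⟨he, hxe⟩).trans (hu f ⟨hf, hxf⟩).symm
  constructor
  · -- chiral ⇒ cycle condition
    intro hChi v p hcyc hlen hbi k
    obtain ⟨i, j, hij, hDij⟩ := hbi
    cases p with
    | nil => simp at hlen
    | cons h1 q1 =>

      rename_i a1
      cases q1 with
      | nil => simp at hlen
      | cons h2 q2 =>
        rename_i a2
        cases q2 with
        | nil => simp at hlen
        | cons h3 q3 =>
          rename_i a3
          cases q3 with
          | nil => simp at hlen
          | cons h4 q4 =>
            cases q4 with
            | cons h5 q5 =>
              simp only [SimpleGraph.Walk.length_cons] at hlen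
              omega
            | nil =>
              simp only [SimpleGraph.Walk.edges_cons, SimpleGraph.Walk.edges_nil,
                List.mem_cons, List.not_mem_nil, or_false] at hDij ⊢
              have hnd := hcyc.isCircuit.isTrail.edges_nodup
              simp only [SimpleGraph.Walk.edges_cons, SimpleGraph.Walk.edges_nil,
                List.nodup_cons, List.mem_cons, List.not_mem_nil, or_false,
                List.nodup_nil, and_true, not_or, not_false_eq_true] at hnd
              obtain ⟨⟨n01, n02, n03⟩, ⟨n12, n13⟩, n23⟩ := hnd
              have hsup := hcyc.support_nodup
              simp only [SimpleGraph.Walk.support_cons, SimpleGraph.Walk.support_nil,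
                List.tail_cons, List.nodup_cons, List.mem_cons, List.not_mem_nil,
                or_false, List.nodup_nil, and_true, not_or, not_false_eq_true] at hsup
              obtain ⟨⟨h12, h13, h1v⟩, ⟨h23, h2v⟩, h3v⟩ := hsup
              have hD0 : s(v, a1) ∈ D i ∨ s(v, a1) ∈ D j :=
                (Set.mem_union _ _ _).1 (hDij _ (Or.inl rfl))
              have hD1 : s(a1, a2) ∈ D i ∨ s(a1, a2) ∈ D j :=
                (Set.mem_union _ _ _).1 (hDij _ (Or.inr (Or.inl rfl)))
              have hD2 : s(a2, a3) ∈ D i ∨ s(a2, a3) ∈ D j :=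
                (Set.mem_union _ _ _).1 (hDij _ (Or.inr (Or.inr (Or.inl rfl))))
              have hD3 : s(a3, v) ∈ D i ∨ s(a3, v) ∈ D j :=
                (Set.mem_union _ _ _).1 (hDij _ (Or.inr (Or.inr (Or.inr rfl))))
              have hne01 : ∀ c', s(v, a1) ∈ D c' → s(a1, a2) ∈ D c' → False := by
                intro c' hx hy
                have h := vertex_unique (x := a1) hx hy (by simp) (by simp)
                rw [Sym2.eq_iff] at h
                rcases h with ⟨hA, -⟩ | ⟨hA, -⟩
                · exact h1.ne hA
                · exact h2v hA.symm
              have hne12 : ∀ c', s(a1, a2) ∈ D c' → s(a2, a3) ∈ D c' → False := by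
                intro c' hx hy
                have h := vertex_unique (x := a2) hx hy (by simp) (by simp)
                rw [Sym2.eq_iff] at h
                rcases h with ⟨hA, -⟩ | ⟨hA, -⟩
                · exact h2.ne hA
                · exact h13 hA
              have hne23 : ∀ c', s(a2, a3) ∈ D c' → s(a3, v) ∈ D c' → False := by
                intro c' hx hy
                have h := vertex_unique (x := a3) hx hy (by simp) (by simp)
                rw [Sym2.eq_iff] at h
                rcases h with ⟨hA, -⟩ | ⟨hA, -⟩
                · exact h3.ne hA
                · exact h2v hA
              have same02 : ∃ c', s(v, a1) ∈ D c' ∧ s(a2, a3) ∈ D c' := by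
                rcases hD1 with hB | hB
                · exact ⟨j, hD0.resolve_left (fun h => hne01 i h hB),
                    hD2.resolve_left (fun h => hne12 i hB h)⟩
                · exact ⟨i, hD0.resolve_right (fun h => hne01 j h hB),
                    hD2.resolve_right (fun h => hne12 j hB h)⟩
              have same13 : ∃ c', s(a1, a2) ∈ D c' ∧ s(a3, v) ∈ D c' := by
                rcases hD2 with hB | hB
                · exact ⟨j, hD1.resolve_left (fun h => hne12 i h hB),
                    hD3.resolve_left (fun h => hne23 i hB h)⟩
                · exact ⟨i, hD1.resolve_right (fun h => hne12 j h hB),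
                    hD3.resolve_right (fun h => hne23 j hB h)⟩
              have upair : ∀ (k' : Fin 4) (e f : Sym2 HVert), (∃ c', e ∈ D c' ∧ f ∈ D c') →
                  e ∈ M k' → f ∈ M k' → e = f := by
                rintro k' e f ⟨c', hA, hB⟩ hme hmf
                obtain ⟨w, -, hu⟩ := hChi k' c'
                exact (hu e ⟨hme, hA⟩).trans (hu f ⟨hmf, hB⟩).symm
              have key : ∀ (k' : Fin 4) (e f : Sym2 HVert),
                  (e = s(v, a1) ∨ e = s(a1, a2) ∨ e = s(a2, a3) ∨ e = s(a3, v)) →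
                  (f = s(v, a1) ∨ f = s(a1, a2) ∨ f = s(a2, a3) ∨ f = s(a3, v)) →
                  e ∈ M k' → f ∈ M k' → e = f := by
                intro k' e f he hf hme hmf
                rcases he with rfl | rfl | rfl | rfl <;> rcases hf with rfl | rfl | rfl | rfl
                · rfl
                · exact share k' a1 _ _ hme hmf (by simp) (by simp)
                · exact upair _ _ _ same02 hme hmf
                · exact share k' v _ _ hme hmf (by simp) (by simp)
                · exact share k' a1 _ _ hme hmf (by simp) (by simp)
                · rfl
                · exact share k' a2 _ _ hme hmf (by simp) (by simp)
                · exact upair _ _ _ same13 hme hmf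
                · obtain ⟨c', hA, hB⟩ := same02
                  exact upair _ _ _ ⟨c', hB, hA⟩ hme hmf
                · exact share k' a2 _ _ hme hmf (by simp) (by simp)
                · rfl
                · exact share k' a3 _ _ hme hmf (by simp) (by simp)
                · exact share k' v _ _ hme hmf (by simp) (by simp)
                · obtain ⟨c', hA, hB⟩ := same13
                  exact upair _ _ _ ⟨c', hB, hA⟩ hme hmf
                · exact share k' a3 _ _ hme hmf (by simp) (by simp)
                · rfl
              obtain ⟨k0, hk0, -⟩ := hPart s(v, a1) (H.mem_edgeSet.2 h1)
              obtain ⟨k1, hk1, -⟩ := hPart s(a1, a2) (H.mem_edgeSet.2 h2)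
              obtain ⟨k2, hk2, -⟩ := hPart s(a2, a3) (H.mem_edgeSet.2 h3)
              obtain ⟨k3, hk3, -⟩ := hPart s(a3, v) (H.mem_edgeSet.2 h4)
              have m01 : k0 ≠ k1 := fun hEq =>
                n01 (key k0 _ _ (Or.inl rfl) (Or.inr (Or.inl rfl)) hk0 (by rw [hEq]; exact hk1))
              have m02 : k0 ≠ k2 := fun hEq =>
                n02 (key k0 _ _ (Or.inl rfl) (Or.inr (Or.inr (Or.inl rfl))) hk0 (by rw [hEq]; exact hk2))
              have m03 : k0 ≠ k3 := fun hEq =>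
                n03 (key k0 _ _ (Or.inl rfl) (Or.inr (Or.inr (Or.inr rfl))) hk0 (by rw [hEq]; exact hk3))
              have m12 : k1 ≠ k2 := fun hEq =>
                n12 (key k1 _ _ (Or.inr (Or.inl rfl)) (Or.inr (Or.inr (Or.inl rfl))) hk1 (by rw [hEq]; exact hk2))
              have m13 : k1 ≠ k3 := fun hEq =>
                n13 (key k1 _ _ (Or.inr (Or.inl rfl)) (Or.inr (Or.inr (Or.inr rfl))) hk1 (by rw [hEq]; exact hk3))
              have m23 : k2 ≠ k3 := fun hEq =>
                n23 (key k2 _ _ (Or.inr (Or.inr (Or.inl rfl))) (Or.inr (Or.inr (Or.inr rfl))) hk2 (by rw [hEq]; exact hk3))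
              have huniv : ({k0, k1, k2, k3} : Finset (Fin 4)) = Finset.univ := by
                apply Finset.eq_univ_of_card
                rw [Finset.card_insert_of_notMem (by simp [m01, m02, m03]),
                  Finset.card_insert_of_notMem (by simp [m12, m13]),
                  Finset.card_insert_of_notMem (by simp [m23]),
                  Finset.card_singleton]
                simp
              have hkmem : k = k0 ∨ k = k1 ∨ k = k2 ∨ k = k3 := by
                have : k ∈ ({k0, k1, k2, k3} : Finset (Fin 4)) := by
                  rw [huniv]; exact Finset.mem_univ k
                simpa using this
              rcases hkmem with rfl | rfl | rfl | rfl
              · exact ⟨_, ⟨Or.inl rfl, hk0⟩,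
                  fun y hy => key k y _ hy.1 (Or.inl rfl) hy.2 hk0⟩
              · exact ⟨_, ⟨Or.inr (Or.inl rfl), hk1⟩,
                  fun y hy => key k y _ hy.1 (Or.inr (Or.inl rfl)) hy.2 hk1⟩
              · exact ⟨_, ⟨Or.inr (Or.inr (Or.inl rfl)), hk2⟩,
                  fun y hy => key k y _ hy.1 (Or.inr (Or.inr (Or.inl rfl))) hy.2 hk2⟩
              · exact ⟨_, ⟨Or.inr (Or.inr (Or.inr rfl)), hk3⟩,
                  fun y hy => key k y _ hy.1 (Or.inr (Or.inr (Or.inr rfl))) hy.2 hk3⟩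
  · -- cycle condition ⇒ chiral
    intro hCyc k i
    have uniq : ∀ (c : Fin 4) (e f : Sym2 HVert),
        e ∈ M k → e ∈ D c → f ∈ M k → f ∈ D c → e = f := by
      intro c e f hme hec hmf hfc
      by_contra hneq
      have hdisj : ∀ x, x ∈ e → x ∈ f → False := fun x hxe hxf =>
        hneq (share k x e f hme hmf hxe hxf)
      obtain ⟨j, x, p, hjc, hpc, hplen, hep, hfp, hsub⟩ :=
        common_cycle hec hfc hneq hdisj
      obtain ⟨w, -, hu⟩ := hCyc x p hpc hplen ⟨c, j, Ne.symm hjc, hsub⟩ k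
      exact hneq ((hu e ⟨hep, hme⟩).trans (hu f ⟨hfp, hmf⟩).symm)
    have hex : ∃ e, e ∈ M k ∧ e ∈ D i := by
      by_contra hno
      push_neg at hno
      have hφ : ∀ x : HVert, ∃ e, e ∈ M k ∧ x ∈ e := fun x => ((hPM k).2 x).exists
      choose φ hφM hφx using hφ
      set ψ : Sym2 HVert → Fin 4 :=
        fun e => if h : ∃ c, e ∈ D c then h.choose else 0 with hψdef
      have hψ : ∀ e : Sym2 HVert, e ∈ H.edgeSet → e ∈ D (ψ e) := by
        intro e he
        have h := edge_class he
        show e ∈ D (if h' : ∃ c, e ∈ D c then h'.choose else 0)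
        rw [dif_pos h]
        exact h.choose_spec
      have hS3 : (Finset.univ.image φ).card ≤ 3 := by
        have h3 : (Finset.univ.erase i : Finset (Fin 4)).card = 3 := by
          rw [Finset.card_erase_of_mem (Finset.mem_univ i)]
          simp
        rw [← h3]
        apply Finset.card_le_card_of_injOn ψ
        · intro e he
          simp only [Finset.mem_coe, Finset.mem_image] at he
          obtain ⟨x, -, rfl⟩ := he
          have hcl := hψ (φ x) ((hPM k).1 (hφM x))
          refine Finset.mem_erase.2 ⟨fun h => ?_, Finset.mem_univ _⟩
          exact hno (φ x) (hφM x) (h ▸ hcl)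
        · intro e he f hf hef
          simp only [Finset.coe_image, Set.mem_image] at he hf
          obtain ⟨x, -, rfl⟩ := he
          obtain ⟨y, -, rfl⟩ := hf
          exact uniq (ψ (φ x)) _ _ (hφM x) (hψ _ ((hPM k).1 (hφM x))) (hφM y)
            (by rw [hef]; exact hψ _ ((hPM k).1 (hφM y)))
      have hmain : (Finset.univ : Finset HVert).card ≤ 2 * (Finset.univ.image φ).card := by
        apply Finset.card_le_mul_card_image
        intro e he
        clear he
        induction e with
        | _ x y =>
          refine le_trans (Finset.card_le_card ?_) (le_trans (Finset.card_insert_le x {y}) (by simp))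
          intro z hz
          simp only [Finset.mem_filter] at hz
          have hm := hφx z
          rw [hz.2, Sym2.mem_iff] at hm
          simp only [Finset.mem_insert, Finset.mem_singleton]
          exact hm
      rw [Finset.card_univ, card_HVert] at hmain
      have := hS3
      omega
    obtain ⟨e, hme, hei⟩ := hex
    exact ⟨e, ⟨hme, hei⟩, fun y hy => uniq i y e hy.1 hy.2 hme hei⟩
end
end

section
/- For each i ∈ {1,2,3,4}, let R_i ∈ O(4,ℝ) be the diagonal matrix that negates the i-th coordinate and fixes all others. Then R_i maps {-1,1}^4 onto itself and the automorphism of H induced by the class of R_i in G/{±I} maps each direction class D_j onto itself; however, for every chiral partition {M_1, M_2, M_3, M_4} of H, this automorphism does not permute the set {M_1, M_2, M_3, M_4}. -/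
open scoped Classical

noncomputable section

/-- the diagonal orthogonal matrix negating the `i`-th coordinate -/
def R (i : Fin 4) : Matrix (Fin 4) (Fin 4) ℝ :=
  Matrix.diagonal (fun j => if j = i then -1 else 1)



/-- negate coordinate `i` -/
def rho (i : Fin 4) (v : V4) : V4 := fun j => if j = i then -v j else v j

lemma R_mulVec (i : Fin 4) (v : V4) : Matrix.mulVec (R i) v = rho i v := by
  funext j
  simp only [R, Matrix.mulVec_diagonal, rho]
  split <;> ring

lemma rho_mem {i : Fin 4} {v : V4} (h : v ∈ cubeSet) : rho i v ∈ cubeSet := by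
  intro j
  rcases h j with h1 | h1 <;> unfold rho <;> split <;> simp [h1]

lemma rho_invol (i : Fin 4) (v : V4) : rho i (rho i v) = v := by
  funext j; by_cases h : j = i <;> simp [rho, h]

lemma rho_neg (i : Fin 4) (v : V4) : rho i (-v) = -(rho i v) := by
  funext j; by_cases h : j = i <;> simp [rho, h]

lemma rho_ne_iff (i : Fin 4) (v w : V4) (k : Fin 4) :
    rho i v k ≠ rho i w k ↔ v k ≠ w k := by
  by_cases h : k = i <;> simp [rho, h]

lemma diffExactly_rho_iff (i j : Fin 4) (v w : V4) :
    diffExactly (rho i v) (rho i w) j ↔ diffExactly v w j := by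
  unfold diffExactly
  exact forall_congr' fun k => by rw [rho_ne_iff]

/-- `rho` on cube vertices -/
def rhoC (i : Fin 4) (v : CubeV) : CubeV := ⟨rho i (v : V4), rho_mem v.2⟩

/-- the induced map on `HVert` -/
def phi0 (i : Fin 4) : HVert → HVert :=
  Quotient.map (rhoC i) (by
    rintro v w (h | h)
    · exact Or.inl (congrArg (rho i) h)
    · right
      show rho i (v : V4) = -(rho i (w : V4))
      rw [show (v : V4) = -(w : V4) from h, rho_neg])

lemma phi0_mk (i : Fin 4) (v : CubeV) : phi0 i (⟦v⟧ : HVert) = (⟦rhoC i v⟧ : HVert) := rfl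

lemma phi0_invol (i : Fin 4) : Function.Involutive (phi0 i) := by
  intro x
  induction x using Quotient.ind with
  | _ v => exact Quotient.sound (Or.inl (rho_invol i (v : V4)))

lemma adj_map (i : Fin 4) {x y : HVert} (h : H.Adj x y) :
    H.Adj (phi0 i x) (phi0 i y) := by
  obtain ⟨hne, v, w, hv, hw, j, hd⟩ := h
  refine ⟨fun hc => hne ((phi0_invol i).injective hc), rhoC i v, rhoC i w, ?_, ?_,
    j, (diffExactly_rho_iff i j _ _).mpr hd⟩
  · rw [← hv]; rfl
  · rw [← hw]; rfl

/-- the graph automorphism -/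
def phiIso (i : Fin 4) : H ≃g H where
  toEquiv := Function.Involutive.toPerm (phi0 i) (phi0_invol i)
  map_rel_iff' := by
    intro a b
    constructor
    · intro h
      have h2 := adj_map i h
      rwa [show (Function.Involutive.toPerm (phi0 i) (phi0_invol i)) a = phi0 i a from rfl,
        show (Function.Involutive.toPerm (phi0 i) (phi0_invol i)) b = phi0 i b from rfl,
        phi0_invol, phi0_invol] at h2
    · exact adj_map i

lemma phiIso_coe (i : Fin 4) : ⇑(phiIso i) = phi0 i := rfl

lemma ne_neg_self {a : ℝ} (h : a = 1 ∨ a = -1) : a ≠ -a := by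
  rcases h with h | h <;> rw [h] <;> norm_num

lemma vec_eq_of_diffExactly {v w : CubeV} {j : Fin 4}
    (hd : diffExactly (v : V4) (w : V4) j) : rho j (v : V4) = (w : V4) := by
  funext k
  by_cases hk : k = j
  · subst hk
    have hne : (v : V4) k ≠ (w : V4) k := (hd k).mpr rfl
    simp only [rho, if_pos rfl]
    rcases v.2 k with h1 | h1 <;> rcases w.2 k with h2 | h2 <;>
      rw [h1, h2] at hne ⊢ <;> simp_all
  · simp only [rho, if_neg hk]
    by_contra hne
    exact hk ((hd k).mp hne)

lemma fix_Di (i : Fin 4) {e : Sym2 HVert} (he : e ∈ D i) :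
    Sym2.map (phi0 i) e = e := by
  obtain ⟨heS, v, w, rfl, hd⟩ := he
  have h1 : rho i (v : V4) = (w : V4) := vec_eq_of_diffExactly hd
  have h2 : rho i (w : V4) = (v : V4) := by rw [← h1, rho_invol]
  erw [Sym2.map_pair_eq, phi0_mk, phi0_mk,
    show (⟦rhoC i v⟧ : HVert) = ⟦w⟧ from Quotient.sound (Or.inl h1),
    show (⟦rhoC i w⟧ : HVert) = ⟦v⟧ from Quotient.sound (Or.inl h2)]
  exact Sym2.eq_swap

lemma move_Dj (i j : Fin 4) (hij : j ≠ i) {e : Sym2 HVert} (he : e ∈ D j) :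
    Sym2.map (phi0 i) e ≠ e := by
  obtain ⟨heS, v, w, rfl, hd⟩ := he
  erw [Sym2.map_pair_eq, phi0_mk, phi0_mk]
  intro hc
  have hkey : (⟦rhoC i v⟧ : HVert) = ⟦v⟧ ∨ (⟦rhoC i v⟧ : HVert) = ⟦w⟧ := by
    rcases Sym2.eq_iff.mp hc with ⟨ha, -⟩ | ⟨ha, -⟩
    · exact Or.inl ha
    · exact Or.inr ha
  rcases hkey with hq | hq
  · rcases Quotient.exact hq with hv | hv
    · have := congrFun hv i
      simp only [rhoC, rho, if_pos rfl] at this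
      exact ne_neg_self (v.2 i) this.symm
    · have := congrFun hv j
      simp only [rhoC, rho, if_neg hij, Pi.neg_apply] at this
      exact ne_neg_self (v.2 j) this
  · rcases Quotient.exact hq with hv | hv
    · have hvw : (v : V4) i = (w : V4) i := by
        by_contra hne
        exact hij ((hd i).mp hne).symm
      have := congrFun hv i
      simp only [rhoC, rho, if_pos rfl] at this
      rw [← hvw] at this
      exact ne_neg_self (v.2 i) this.symm
    · obtain ⟨k, hki, hkj⟩ := exists_third i j
      have hvw : (v : V4) k = (w : V4) k := by
        by_contra hne
        exact hkj ((hd k).mp hne)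
      have := congrFun hv k
      simp only [rhoC, rho, if_neg hki, Pi.neg_apply] at this
      rw [hvw] at this
      exact ne_neg_self (w.2 k) this

lemma mapD (i j : Fin 4) {e : Sym2 HVert} (he : e ∈ D j) :
    Sym2.map (phi0 i) e ∈ D j := by
  obtain ⟨heS, v, w, rfl, hd⟩ := he
  erw [Sym2.map_pair_eq, phi0_mk, phi0_mk]
  refine ⟨?_, rhoC i v, rhoC i w, rfl, (diffExactly_rho_iff i j _ _).mpr hd⟩
  erw [SimpleGraph.mem_edgeSet] at heS ⊢
  exact adj_map i heS

lemma sym2_map_invol (i : Fin 4) (e : Sym2 HVert) :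
    Sym2.map (phi0 i) (Sym2.map (phi0 i) e) = e := by
  rw [Sym2.map_map, show phi0 i ∘ phi0 i = id from funext (phi0_invol i), Sym2.map_id, id_eq]

lemma D_image (i j : Fin 4) : Sym2.map (phi0 i) '' D j = D j := by
  apply Set.Subset.antisymm
  · rintro _ ⟨e, he, rfl⟩
    exact mapD i j he
  · intro e he
    exact ⟨Sym2.map (phi0 i) e, mapD i j he, sym2_map_invol i e⟩


/-- each coordinate reflection `R i` lies in `O(4,ℝ)`, maps `{-1,1}^4`
onto itself, and the automorphism of `H` it induces (which represents the class of
`R i` in `G/{±I}`) maps each direction class `D j` onto itself; however, for every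
chiral partition `{M k}` of `H`, this automorphism does not permute the set of
matchings. -/

theorem stmt_11 :
    ∀ i : Fin 4,
      R i ∈ Matrix.orthogonalGroup (Fin 4) ℝ ∧
      Matrix.mulVec (R i) '' cubeSet = cubeSet ∧
      ∃ φ : H ≃g H,
        (∀ v : CubeV, ∃ w : CubeV, (w : V4) = Matrix.mulVec (R i) (v : V4) ∧
          φ (⟦v⟧ : HVert) = (⟦w⟧ : HVert)) ∧
        (∀ j : Fin 4, Sym2.map ⇑φ '' D j = D j) ∧
        (∀ M : Fin 4 → Set (Sym2 HVert), IsChiralPartition M →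
          ¬ (∀ k : Fin 4, ∃ l : Fin 4, Sym2.map ⇑φ '' M k = M l)) := by
  
  intro i
  refine ⟨?_, ?_, phiIso i, ?_, ?_, ?_⟩
  · rw [Matrix.mem_orthogonalGroup_iff]
    rw [R, Matrix.diagonal_transpose,
      Matrix.diagonal_mul_diagonal]
    convert Matrix.diagonal_one with j
    by_cases h : j = i <;> simp [h]
  · apply Set.Subset.antisymm
    · rintro _ ⟨v, hv, rfl⟩
      rw [R_mulVec]
      exact rho_mem hv
    · intro v hv
      exact ⟨rho i v, rho_mem hv, by rw [R_mulVec, rho_invol]⟩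
  · intro v
    exact ⟨rhoC i v, by rw [R_mulVec]; rfl, rfl⟩
  · intro j
    rw [phiIso_coe]
    exact D_image i j
  · rintro M ⟨hPM, hPart, hUnique⟩ hyp
    rw [phiIso_coe] at hyp
    obtain ⟨l, hl⟩ := hyp 0
    obtain ⟨e, ⟨heM, heD⟩, -⟩ := hUnique 0 i
    have hel : e ∈ M l := by
      rw [← hl]
      exact ⟨e, heM, fix_Di i heD⟩
    have hl0 : l = 0 := by
      obtain ⟨k, -, hk⟩ := hPart e ((hPM 0).1 heM)
      exact (hk l hel).trans (hk 0 heM).symm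
    subst hl0
    obtain ⟨j, hji⟩ : ∃ j : Fin 4, j ≠ i := by
      rcases exists_third i i with ⟨j, hj, -⟩
      exact ⟨j, hj⟩
    obtain ⟨e', ⟨h1, h2⟩, huniq⟩ := hUnique 0 j
    have hm : Sym2.map (phi0 i) e' ∈ M 0 := by
      rw [← hl]
      exact ⟨e', h1, rfl⟩
    exact move_Dj i j hji h2 (huniq _ ⟨hm, mapD i j h2⟩)
end
end
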